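/- arXiv:1703.00137 — 6 statements merged into one kernel-verified Lean document; each statement's English description precedes it below -/
import Mathlib

section
/- Let α ∈ [0,2) and let f : [0,∞) → [0,∞) be locally bounded, g : [0,∞) → [0,∞) non-decreasing, and A, B > 0 constants such that f(t) ≤ A ∫₀ᵗ (s(t−s)/t)^{−α/2} f(s) ds + B g(t) for all t ≥ 0. Then there exists a constant C depending only on α such that f(t) ≤ 2 B g(t) exp(C A^{2/(2−α)} t) for all t ≥ 0. -/
open MeasureTheory Set Real

private lemma G_int {β lam : ℝ} (hβ1 : β < 1) (hlam : 0 < lam) :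
    IntegrableOn (fun u : ℝ => u ^ (-β) * Real.exp (-(lam * u))) (Ioi 0) := by
  have h := integrableOn_rpow_mul_exp_neg_mul_rpow (p := 1) (s := -β) (b := lam)
    (by linarith) (by norm_num) hlam
  refine h.congr_fun (fun x _ => ?_) measurableSet_Ioi
  simp only [Real.rpow_one, neg_mul]

private lemma G_val {β lam : ℝ} (hβ1 : β < 1) (hlam : 0 < lam) :
    ∫ u in Ioi (0:ℝ), u ^ (-β) * Real.exp (-(lam * u))
      = lam ^ (β - 1) * Real.Gamma (1 - β) := by
  have h := Real.integral_rpow_mul_exp_neg_mul_Ioi (a := 1 - β) (r := lam)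
    (by linarith) hlam
  have h1 : (1 : ℝ) - β - 1 = -β := by ring
  rw [h1] at h
  rw [h, one_div, ← Real.rpow_neg_one lam, ← Real.rpow_mul hlam.le]
  congr 2
  ring

-- integral of G over Ioo 0 t is at most the Gamma bound
private lemma G_int_Ioo {β lam : ℝ} (hβ1 : β < 1) (hlam : 0 < lam) (t : ℝ) :
    IntegrableOn (fun u : ℝ => u ^ (-β) * Real.exp (-(lam * u))) (Ioo 0 t) :=
  (G_int hβ1 hlam).mono_set Ioo_subset_Ioi_self

private lemma G_nonneg {β lam : ℝ} (u : ℝ) (hu : 0 ≤ u) :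
    0 ≤ u ^ (-β) * Real.exp (-(lam * u)) :=
  mul_nonneg (Real.rpow_nonneg hu _) (Real.exp_pos _).le

private lemma G_bound_Ioo {β lam : ℝ} (hβ1 : β < 1) (hlam : 0 < lam) (t : ℝ) :
    ∫ u in Ioo (0:ℝ) t, u ^ (-β) * Real.exp (-(lam * u))
      ≤ lam ^ (β - 1) * Real.Gamma (1 - β) := by
  rw [← G_val hβ1 hlam]
  refine setIntegral_mono_set (G_int hβ1 hlam) ?_ ?_
  · filter_upwards [ae_restrict_mem measurableSet_Ioi] with u hu
    exact G_nonneg u (le_of_lt hu)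
  · exact HasSubset.Subset.eventuallyLE Ioo_subset_Ioi_self

-- reflected G : integrability and integral identity on Ioo 0 t
private lemma G_refl_int {β lam : ℝ} (hβ1 : β < 1) (hlam : 0 < lam) {t : ℝ} (ht : 0 < t) :
    IntegrableOn (fun s : ℝ => (t - s) ^ (-β) * Real.exp (-(lam * (t - s)))) (Ioo 0 t) := by
  have hGi : IntervalIntegrable (fun u : ℝ => u ^ (-β) * Real.exp (-(lam * u))) volume 0 t :=
    (intervalIntegrable_iff_integrableOn_Ioc_of_le ht.le).2
      ((G_int hβ1 hlam).mono_set Ioc_subset_Ioi_self)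
  have := hGi.comp_sub_left t
  rw [sub_zero, sub_self] at this
  have h2 := (intervalIntegrable_iff_integrableOn_Ioc_of_le ht.le).1 this.symm
  exact h2.mono_set Ioo_subset_Ioc_self

private lemma G_refl_val {β lam : ℝ} {t : ℝ} (ht : 0 < t) :
    ∫ s in Ioo (0:ℝ) t, (t - s) ^ (-β) * Real.exp (-(lam * (t - s)))
      = ∫ u in Ioo (0:ℝ) t, u ^ (-β) * Real.exp (-(lam * u)) := by
  rw [← integral_Ioc_eq_integral_Ioo, ← integral_Ioc_eq_integral_Ioo,
    ← intervalIntegral.integral_of_le ht.le, ← intervalIntegral.integral_of_le ht.le]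
  have := intervalIntegral.integral_comp_sub_left
    (a := 0) (b := t) (fun u : ℝ => u ^ (-β) * Real.exp (-(lam * u))) t
  rw [sub_zero, sub_self] at this
  rw [this]

-- kernel pointwise bound
private lemma kernel_le {β t s : ℝ} (hβ0 : 0 ≤ β) (hs : s ∈ Ioo 0 t) :
    (s * (t - s) / t) ^ (-β) ≤ 2 ^ β * (s ^ (-β) + (t - s) ^ (-β)) := by
  obtain ⟨hs0, hst⟩ := hs
  have ht : 0 < t := lt_trans hs0 hst
  have hts : 0 < t - s := by linarith
  have h2 : (0:ℝ) ≤ 2 ^ β := Real.rpow_nonneg (by norm_num) _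
  rcases le_total s (t - s) with h | h
  · have hb : s / 2 ≤ s * (t - s) / t := by
      rw [div_le_div_iff₀ (by norm_num) ht]
      nlinarith
    calc (s * (t - s) / t) ^ (-β) ≤ (s / 2) ^ (-β) :=
          Real.rpow_le_rpow_of_nonpos (by positivity) hb (neg_nonpos.2 hβ0)
      _ = 2 ^ β * s ^ (-β) := by
          rw [Real.div_rpow hs0.le (by norm_num), div_eq_mul_inv,
            ← Real.rpow_neg (by norm_num : (0:ℝ) ≤ 2), neg_neg, mul_comm]
      _ ≤ 2 ^ β * (s ^ (-β) + (t - s) ^ (-β)) := by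
          refine mul_le_mul_of_nonneg_left ?_ h2
          exact le_add_of_nonneg_right (Real.rpow_nonneg hts.le _)
  · have hb : (t - s) / 2 ≤ s * (t - s) / t := by
      rw [div_le_div_iff₀ (by norm_num) ht]
      nlinarith
    calc (s * (t - s) / t) ^ (-β) ≤ ((t - s) / 2) ^ (-β) :=
          Real.rpow_le_rpow_of_nonpos (by positivity) hb (neg_nonpos.2 hβ0)
      _ = 2 ^ β * (t - s) ^ (-β) := by
          rw [Real.div_rpow hts.le (by norm_num), div_eq_mul_inv,
            ← Real.rpow_neg (by norm_num : (0:ℝ) ≤ 2), neg_neg, mul_comm]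
      _ ≤ 2 ^ β * (s ^ (-β) + (t - s) ^ (-β)) := by
          refine mul_le_mul_of_nonneg_left ?_ h2
          exact le_add_of_nonneg_left (Real.rpow_nonneg hs0.le _)

-- weighted kernel pointwise bound
private lemma kernel_exp_le {β lam t s : ℝ} (hβ0 : 0 ≤ β) (hlam : 0 < lam)
    (hs : s ∈ Ioo 0 t) :
    (s * (t - s) / t) ^ (-β) * Real.exp (lam * s)
      ≤ Real.exp (lam * t) * (2 ^ (β + 1) *
        (s ^ (-β) * Real.exp (-(lam * s)) + (t - s) ^ (-β) * Real.exp (-(lam * (t - s))))) := by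
  obtain ⟨hs0, hst⟩ := hs
  have hts : 0 < t - s := by linarith
  have hexp : Real.exp (lam * s) = Real.exp (lam * t) * Real.exp (-(lam * (t - s))) := by
    rw [← Real.exp_add]; ring_nf
  rw [hexp, ← mul_assoc, mul_comm ((s * (t - s) / t) ^ (-β)) (Real.exp (lam * t)), mul_assoc]
  refine mul_le_mul_of_nonneg_left ?_ (Real.exp_pos _).le
  -- goal: k * e ≤ 2^(β+1) * (G s + G (t-s))
  have hke : (s * (t - s) / t) ^ (-β) * Real.exp (-(lam * (t - s)))
      ≤ (2 ^ β * (s ^ (-β) + (t - s) ^ (-β))) * Real.exp (-(lam * (t - s)))  :=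
    mul_le_mul_of_nonneg_right (kernel_le hβ0 ⟨hs0, hst⟩) (Real.exp_pos _).le
  refine hke.trans ?_
  have hGs : (0:ℝ) ≤ s ^ (-β) * Real.exp (-(lam * s)) :=
    mul_nonneg (Real.rpow_nonneg hs0.le _) (Real.exp_pos _).le
  have hGt : (0:ℝ) ≤ (t - s) ^ (-β) * Real.exp (-(lam * (t - s))) :=
    mul_nonneg (Real.rpow_nonneg hts.le _) (Real.exp_pos _).le
  have key : s ^ (-β) * Real.exp (-(lam * (t - s)))
      ≤ s ^ (-β) * Real.exp (-(lam * s)) + (t - s) ^ (-β) * Real.exp (-(lam * (t - s))) := by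
    rcases le_total s (t - s) with h | h
    · refine le_add_of_le_of_nonneg ?_ hGt
      refine mul_le_mul_of_nonneg_left ?_ (Real.rpow_nonneg hs0.le _)
      exact Real.exp_le_exp.2 (by nlinarith)
    · refine le_add_of_nonneg_of_le hGs ?_
      refine mul_le_mul_of_nonneg_right ?_ (Real.exp_pos _).le
      exact Real.rpow_le_rpow_of_nonpos hts h (neg_nonpos.2 hβ0)
  have h2b : (2:ℝ) ^ (β + 1) = 2 ^ β * 2 := by
    rw [Real.rpow_add (by norm_num) β 1, Real.rpow_one]
  rw [h2b]
  have h2 : (0:ℝ) ≤ 2 ^ β := Real.rpow_nonneg (by norm_num) _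
  calc (2 ^ β * (s ^ (-β) + (t - s) ^ (-β))) * Real.exp (-(lam * (t - s)))
      = 2 ^ β * (s ^ (-β) * Real.exp (-(lam * (t - s)))
          + (t - s) ^ (-β) * Real.exp (-(lam * (t - s)))) := by ring
    _ ≤ 2 ^ β * ((s ^ (-β) * Real.exp (-(lam * s))
          + (t - s) ^ (-β) * Real.exp (-(lam * (t - s))))
          + (t - s) ^ (-β) * Real.exp (-(lam * (t - s)))) := by
        refine mul_le_mul_of_nonneg_left (add_le_add_left key _) h2
    _ ≤ 2 ^ β * 2 * (s ^ (-β) * Real.exp (-(lam * s))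
          + (t - s) ^ (-β) * Real.exp (-(lam * (t - s)))) := by nlinarith

private lemma kernel_int {β lam t : ℝ} (hβ0 : 0 ≤ β) (hβ1 : β < 1) (hlam : 0 < lam)
    (ht : 0 < t) :
    IntegrableOn (fun s : ℝ => (s * (t - s) / t) ^ (-β) * Real.exp (lam * s)) (Ioo 0 t) := by
  have hdom : IntegrableOn (fun s : ℝ => Real.exp (lam * t) * (2 ^ (β + 1) *
      (s ^ (-β) * Real.exp (-(lam * s)) + (t - s) ^ (-β) * Real.exp (-(lam * (t - s))))))
      (Ioo 0 t) :=
    (((G_int_Ioo hβ1 hlam t).add (G_refl_int hβ1 hlam ht)).const_mul _).const_mul _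
  refine hdom.mono' ?_ ?_
  · refine AEStronglyMeasurable.restrict ?_
    refine (Measurable.stronglyMeasurable ?_).aestronglyMeasurable
    fun_prop
  · filter_upwards [ae_restrict_mem measurableSet_Ioo] with s hs
    have hbase : (0:ℝ) ≤ s * (t - s) / t := by
      apply div_nonneg _ ht.le
      exact mul_nonneg hs.1.le (by linarith [hs.2])
    have hnn : (0:ℝ) ≤ (s * (t - s) / t) ^ (-β) * Real.exp (lam * s) :=
      mul_nonneg (Real.rpow_nonneg hbase _) (Real.exp_pos _).le
    rw [Real.norm_eq_abs, abs_of_nonneg hnn]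
    exact kernel_exp_le hβ0 hlam hs

private lemma kernel_bound {β lam t : ℝ} (hβ0 : 0 ≤ β) (hβ1 : β < 1) (hlam : 0 < lam)
    (ht : 0 < t) :
    ∫ s in Ioo (0:ℝ) t, (s * (t - s) / t) ^ (-β) * Real.exp (lam * s)
      ≤ Real.exp (lam * t) * ((2 ^ (β + 2) * Real.Gamma (1 - β)) * lam ^ (β - 1)) := by
  have hdom : IntegrableOn (fun s : ℝ => Real.exp (lam * t) * (2 ^ (β + 1) *
      (s ^ (-β) * Real.exp (-(lam * s)) + (t - s) ^ (-β) * Real.exp (-(lam * (t - s))))))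
      (Ioo 0 t) :=
    (((G_int_Ioo hβ1 hlam t).add (G_refl_int hβ1 hlam ht)).const_mul _).const_mul _
  have h1 : ∫ s in Ioo (0:ℝ) t, (s * (t - s) / t) ^ (-β) * Real.exp (lam * s)
      ≤ ∫ s in Ioo (0:ℝ) t, Real.exp (lam * t) * (2 ^ (β + 1) *
        (s ^ (-β) * Real.exp (-(lam * s)) + (t - s) ^ (-β) * Real.exp (-(lam * (t - s))))) := by
    refine integral_mono_of_nonneg ?_ hdom ?_
    · filter_upwards [ae_restrict_mem measurableSet_Ioo] with s hs
      have hbase : (0:ℝ) ≤ s * (t - s) / t := by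
        apply div_nonneg _ ht.le
        exact mul_nonneg hs.1.le (by linarith [hs.2])
      exact mul_nonneg (Real.rpow_nonneg hbase _) (Real.exp_pos _).le
    · filter_upwards [ae_restrict_mem measurableSet_Ioo] with s hs
      exact kernel_exp_le hβ0 hlam hs
  refine h1.trans ?_
  rw [integral_const_mul, integral_const_mul,
    integral_add (G_int_Ioo hβ1 hlam t) (G_refl_int hβ1 hlam ht), G_refl_val ht]
  have h2 : (∫ u in Ioo (0:ℝ) t, u ^ (-β) * Real.exp (-(lam * u)))
      + (∫ u in Ioo (0:ℝ) t, u ^ (-β) * Real.exp (-(lam * u)))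
      ≤ 2 * (lam ^ (β - 1) * Real.Gamma (1 - β)) := by
    have := G_bound_Ioo hβ1 hlam t
    linarith
  have h3 : (0:ℝ) ≤ 2 ^ (β + 1) := Real.rpow_nonneg (by norm_num) _
  have h4 : (2:ℝ) ^ (β + 2) = 2 ^ (β + 1) * 2 := by
    have h := Real.rpow_add (show (0:ℝ) < 2 by norm_num) (β + 1) 1
    rw [Real.rpow_one] at h
    rw [show β + 2 = β + 1 + 1 by ring, h]
  refine mul_le_mul_of_nonneg_left ?_ (Real.exp_pos _).le
  calc (2:ℝ) ^ (β + 1) * ((∫ u in Ioo (0:ℝ) t, u ^ (-β) * Real.exp (-(lam * u)))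
        + ∫ u in Ioo (0:ℝ) t, u ^ (-β) * Real.exp (-(lam * u)))
      ≤ 2 ^ (β + 1) * (2 * (lam ^ (β - 1) * Real.Gamma (1 - β))) :=
        mul_le_mul_of_nonneg_left h2 h3
    _ = 2 ^ (β + 2) * Real.Gamma (1 - β) * lam ^ (β - 1) := by rw [h4]; ring

/-- Gronwall-type lemma: if `f t ≤ A ∫₀ᵗ (s(t−s)/t)^{−α/2} f(s) ds + B g(t)` for all `t ≥ 0`,
with `f` nonnegative and locally bounded, `g` nonnegative and nondecreasing, then
`f t ≤ 2 B g(t) exp(C A^{2/(2−α)} t)` for a constant `C` depending only on `α`. -/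
theorem stmt0 (α : ℝ) (hα0 : 0 ≤ α) (hα2 : α < 2) :
    ∃ C : ℝ, 0 < C ∧ ∀ (f g : ℝ → ℝ) (A B : ℝ), 0 < A → 0 < B →
      (∀ t, 0 ≤ f t) → (∀ t, 0 ≤ g t) →
      (∀ K : ℝ, BddAbove (f '' Icc 0 K)) →
      MonotoneOn g (Ici 0) →
      (∀ t ≥ (0:ℝ), f t ≤ A * (∫ s in Ioo 0 t, (s * (t - s) / t) ^ (-(α/2)) * f s) + B * g t) →
      ∀ t ≥ (0:ℝ), f t ≤ 2 * B * g t * Real.exp (C * A ^ (2/(2-α)) * t) := by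
  have hβ0 : (0:ℝ) ≤ α / 2 := by linarith
  have hβ1 : α / 2 < 1 := by linarith
  set β := α / 2 with hβdef
  have hΓ : 0 < Real.Gamma (1 - β) := Real.Gamma_pos_of_pos (by linarith)
  set D := 2 ^ (β + 2) * Real.Gamma (1 - β) with hDdef
  have hDpos : 0 < D := mul_pos (Real.rpow_pos_of_pos (by norm_num) _) hΓ
  refine ⟨(2 * D) ^ (2 / (2 - α)), Real.rpow_pos_of_pos (by linarith) _, ?_⟩
  intro f g A B hA hB hf0 hg0 hfb hgmono hineq T hT
  set lam := (2 * D) ^ (2 / (2 - α)) * A ^ (2 / (2 - α)) with hlamdef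
  have hlampos : 0 < lam :=
    mul_pos (Real.rpow_pos_of_pos (by linarith) _) (Real.rpow_pos_of_pos hA _)
  have h2a : (0:ℝ) < 2 - α := by linarith
  have hkey : A * (D * lam ^ (β - 1)) = 1 / 2 := by
    have hlam_eq : lam = (2 * D * A) ^ (2 / (2 - α)) := by
      rw [hlamdef, ← Real.mul_rpow (by positivity) hA.le]
    have hexp1 : (2 / (2 - α)) * ((2 - α) / 2) = 1 := by field_simp
    have h1 : lam ^ ((2 - α) / 2) = 2 * D * A := by
      rw [hlam_eq, ← Real.rpow_mul (by positivity), hexp1, Real.rpow_one]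
    have h2 : lam ^ (β - 1) = (2 * D * A)⁻¹ := by
      rw [show β - 1 = -((2 - α) / 2) by rw [hβdef]; ring,
        Real.rpow_neg hlampos.le, h1]
    rw [h2]
    field_simp
  -- the weighted sup
  set S := (fun s => f s * Real.exp (-(lam * s))) '' Icc 0 T with hSdef
  have hSne : S.Nonempty := ⟨_, mem_image_of_mem _ (left_mem_Icc.2 hT)⟩
  obtain ⟨M, hM⟩ := hfb T
  have hSbdd : BddAbove S := by
    refine ⟨M, ?_⟩
    rintro x ⟨s, hs, rfl⟩
    have h1 : Real.exp (-(lam * s)) ≤ 1 :=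
      Real.exp_le_one_iff.2 (neg_nonpos.2 (mul_nonneg hlampos.le hs.1))
    have h2 : f s ≤ M := hM (mem_image_of_mem f hs)
    calc f s * Real.exp (-(lam * s)) ≤ f s * 1 :=
          mul_le_mul_of_nonneg_left h1 (hf0 s)
      _ = f s := mul_one _
      _ ≤ M := h2
  set φ := sSup S with hφdef
  have hφ_ub : ∀ s ∈ Icc (0:ℝ) T, f s * Real.exp (-(lam * s)) ≤ φ := fun s hs =>
    le_csSup hSbdd (mem_image_of_mem _ hs)
  have hφ0 : 0 ≤ φ := by
    refine le_trans ?_ (hφ_ub 0 (left_mem_Icc.2 hT))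
    exact mul_nonneg (hf0 0) (Real.exp_pos _).le
  have hfle : ∀ s ∈ Icc (0:ℝ) T, f s ≤ φ * Real.exp (lam * s) := by
    intro s hs
    have h := mul_le_mul_of_nonneg_right (hφ_ub s hs) (Real.exp_pos (lam * s)).le
    rwa [mul_assoc, ← Real.exp_add, neg_add_cancel, Real.exp_zero, mul_one] at h
  have hstep : ∀ t ∈ Icc (0:ℝ) T, f t * Real.exp (-(lam * t)) ≤ φ / 2 + B * g T := by
    rintro t ⟨ht0, htT⟩
    rcases ht0.lt_or_eq with htpos | hteq
    · -- positive case
      have hI1 : (∫ s in Ioo (0:ℝ) t, (s * (t - s) / t) ^ (-β) * f s)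
          ≤ ∫ s in Ioo (0:ℝ) t, φ * ((s * (t - s) / t) ^ (-β) * Real.exp (lam * s)) := by
        refine integral_mono_of_nonneg ?_
          ((kernel_int hβ0 hβ1 hlampos htpos).const_mul φ) ?_
        · filter_upwards [ae_restrict_mem measurableSet_Ioo] with s hs
          have hbase : (0:ℝ) ≤ s * (t - s) / t := by
            apply div_nonneg _ (le_of_lt htpos)
            exact mul_nonneg hs.1.le (by linarith [hs.2])
          exact mul_nonneg (Real.rpow_nonneg hbase _) (hf0 s)
        · filter_upwards [ae_restrict_mem measurableSet_Ioo] with s hs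
          have hbase : (0:ℝ) ≤ (s * (t - s) / t) ^ (-β) := by
            apply Real.rpow_nonneg
            apply div_nonneg _ (le_of_lt htpos)
            exact mul_nonneg hs.1.le (by linarith [hs.2])
          have hfs : f s ≤ φ * Real.exp (lam * s) :=
            hfle s ⟨hs.1.le, hs.2.le.trans htT⟩
          calc (s * (t - s) / t) ^ (-β) * f s
              ≤ (s * (t - s) / t) ^ (-β) * (φ * Real.exp (lam * s)) :=
                mul_le_mul_of_nonneg_left hfs hbase
            _ = φ * ((s * (t - s) / t) ^ (-β) * Real.exp (lam * s)) := by ring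
      have hI2 : (∫ s in Ioo (0:ℝ) t, φ * ((s * (t - s) / t) ^ (-β) * Real.exp (lam * s)))
          ≤ φ * (Real.exp (lam * t) * (D * lam ^ (β - 1))) := by
        rw [integral_const_mul]
        refine mul_le_mul_of_nonneg_left ?_ hφ0
        refine (kernel_bound hβ0 hβ1 hlampos htpos).trans (le_of_eq ?_)
        rw [hDdef]
      have hft : f t ≤ φ * Real.exp (lam * t) / 2 + B * g t := by
        have h := hineq t ht0
        have : A * (∫ s in Ioo (0:ℝ) t, (s * (t - s) / t) ^ (-β) * f s)
            ≤ A * (φ * (Real.exp (lam * t) * (D * lam ^ (β - 1)))) :=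
          mul_le_mul_of_nonneg_left (hI1.trans hI2) hA.le
        have heq : A * (φ * (Real.exp (lam * t) * (D * lam ^ (β - 1))))
            = φ * Real.exp (lam * t) * (A * (D * lam ^ (β - 1))) := by ring
        rw [heq, hkey] at this
        calc f t ≤ A * (∫ s in Ioo (0:ℝ) t, (s * (t - s) / t) ^ (-β) * f s) + B * g t := h
          _ ≤ φ * Real.exp (lam * t) * (1 / 2) + B * g t := by linarith
          _ = φ * Real.exp (lam * t) / 2 + B * g t := by ring
      have hgT : g t * Real.exp (-(lam * t)) ≤ g T := by
        have h1 : Real.exp (-(lam * t)) ≤ 1 :=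
          Real.exp_le_one_iff.2 (neg_nonpos.2 (mul_nonneg hlampos.le ht0))
        calc g t * Real.exp (-(lam * t)) ≤ g t * 1 :=
              mul_le_mul_of_nonneg_left h1 (hg0 t)
          _ = g t := mul_one _
          _ ≤ g T := hgmono (mem_Ici.2 ht0) (mem_Ici.2 hT) htT
      have := mul_le_mul_of_nonneg_right hft (Real.exp_pos (-(lam * t))).le
      calc f t * Real.exp (-(lam * t))
          ≤ (φ * Real.exp (lam * t) / 2 + B * g t) * Real.exp (-(lam * t)) := this
        _ = φ / 2 * (Real.exp (lam * t) * Real.exp (-(lam * t)))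
            + B * (g t * Real.exp (-(lam * t))) := by ring
        _ = φ / 2 + B * (g t * Real.exp (-(lam * t))) := by
            rw [← Real.exp_add, add_neg_cancel, Real.exp_zero, mul_one]
        _ ≤ φ / 2 + B * g T := by nlinarith [hgT, hB]
    · -- t = 0 case
      have h := hineq t ht0
      rw [← hteq] at h ⊢
      rw [Ioo_self, Measure.restrict_empty, integral_zero_measure] at h
      have hg0T : g 0 ≤ g T := hgmono (mem_Ici.2 le_rfl) (mem_Ici.2 hT) hT
      have hBg : B * g 0 ≤ B * g T := mul_le_mul_of_nonneg_left hg0T hB.le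
      have hexp0 : Real.exp (-(lam * 0)) = 1 := by simp
      rw [hexp0, mul_one]
      linarith
  have hφle : φ ≤ φ / 2 + B * g T := by
    refine csSup_le hSne ?_
    rintro x ⟨t, ht, rfl⟩
    exact hstep t ht
  have hφ2 : φ ≤ 2 * (B * g T) := by linarith
  have hfinal := hfle T (right_mem_Icc.2 hT)
  calc f T ≤ φ * Real.exp (lam * T) := hfinal
    _ ≤ 2 * (B * g T) * Real.exp (lam * T) :=
        mul_le_mul_of_nonneg_right hφ2 (Real.exp_pos _).le
    _ = 2 * B * g T * Real.exp ((2 * D) ^ (2 / (2 - α)) * A ^ (2 / (2 - α)) * T) := by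
        rw [hlamdef]; ring_nf
end

section
/- Let α ∈ [0,2), ρ > 0 and t > 0. Then ∫₀ᵗ (s(t−s)/t)^{−α/2} e^{−ρ(t−s)} ds ≤ 2^{1+α/2} ∫₀^∞ s^{−α/2} e^{−ρ s} ds = 2^{1+α/2} Γ(1−α/2) ρ^{−(2−α)/2}. -/
open MeasureTheory Set Real

/-- For `α ∈ [0,2)`, `ρ > 0`, `t > 0`:
`∫₀ᵗ (s(t−s)/t)^{−α/2} e^{−ρ(t−s)} ds ≤ 2^{1+α/2} ∫₀^∞ s^{−α/2} e^{−ρs} ds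
  = 2^{1+α/2} Γ(1−α/2) ρ^{−(2−α)/2}`. -/
theorem stmt1 (α ρ t : ℝ) (hα0 : 0 ≤ α) (hα2 : α < 2) (hρ : 0 < ρ) (ht : 0 < t) :
    (∫ s in Ioo 0 t, (s * (t - s) / t) ^ (-(α/2)) * Real.exp (-ρ * (t - s)))
      ≤ 2 ^ (1 + α/2) * ∫ s in Ioi (0:ℝ), s ^ (-(α/2)) * Real.exp (-ρ * s)
    ∧ (∫ s in Ioi (0:ℝ), s ^ (-(α/2)) * Real.exp (-ρ * s))
      = Real.Gamma (1 - α/2) * ρ ^ (-(2-α)/2) := by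
  have hβ : -(α/2) ≤ 0 := by linarith
  have ha : (0:ℝ) < 1 - α/2 := by linarith
  set h : ℝ → ℝ := fun s => s ^ (-(α/2)) * Real.exp (-ρ * s) with hh
  -- integrability of h on Ioi 0
  have hInt : IntegrableOn h (Ioi 0) := by
    have h1 := integrableOn_rpow_mul_exp_neg_mul_rpow
      (s := -(α/2)) (p := 1) (b := ρ) (by linarith) one_pos hρ
    exact h1.congr_fun (fun x hx => by simp [hh, Real.rpow_one]) measurableSet_Ioi
  -- value of the Gamma integral
  have hval : (∫ s in Ioi (0:ℝ), h s) = Real.Gamma (1 - α/2) * ρ ^ (-(2-α)/2) := by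
    have h1 := Real.integral_rpow_mul_exp_neg_mul_Ioi (a := 1 - α/2) ha hρ
    rw [show (1 - α/2 - 1) = -(α/2) by ring] at h1
    have h2 : (∫ s in Ioi (0:ℝ), h s) = ∫ s in Ioi (0:ℝ), s ^ (-(α/2)) * Real.exp (-(ρ * s)) := by
      simp [hh, neg_mul]
    rw [h2, h1, one_div, ← Real.rpow_neg_one ρ, ← Real.rpow_mul hρ.le,
      show (-1 : ℝ) * (1 - α/2) = -(2-α)/2 by ring, mul_comm]
  -- nonnegativity of h on Ioi 0
  have hnn : ∀ s : ℝ, 0 ≤ s → 0 ≤ h s := fun s hs =>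
    mul_nonneg (Real.rpow_nonneg hs _) (Real.exp_pos _).le
  -- key pointwise bound
  have key : ∀ s ∈ Ioo (0:ℝ) t, (s * (t - s) / t) ^ (-(α/2)) * Real.exp (-ρ * (t - s))
      ≤ 2 ^ (α/2) * (h s + h (t - s)) := by
    intro s hs
    obtain ⟨hs0, hst⟩ := hs
    have hts : 0 < t - s := by linarith
    have h2pos : (0:ℝ) < 2 ^ (α/2) := Real.rpow_pos_of_pos two_pos _
    rcases le_or_gt s (t/2) with hcase | hcase
    · -- s ≤ t/2 : bound by 2^(α/2) * h s
      have h1 : s / 2 ≤ s * (t - s) / t := by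
        rw [div_le_div_iff₀ two_pos ht]; nlinarith
      have h2 : (s * (t - s) / t) ^ (-(α/2)) ≤ (s/2) ^ (-(α/2)) :=
        Real.rpow_le_rpow_of_nonpos (by positivity) h1 hβ
      have h3 : (s/2:ℝ) ^ (-(α/2)) = 2 ^ (α/2) * s ^ (-(α/2)) := by
        rw [Real.div_rpow hs0.le (by norm_num), Real.rpow_neg (by norm_num : (0:ℝ) ≤ 2),
          div_eq_mul_inv, inv_inv, mul_comm]
      have h4 : Real.exp (-ρ * (t - s)) ≤ Real.exp (-ρ * s) := by
        apply Real.exp_le_exp.mpr; nlinarith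
      calc (s * (t - s) / t) ^ (-(α/2)) * Real.exp (-ρ * (t - s))
          ≤ (s/2) ^ (-(α/2)) * Real.exp (-ρ * s) :=
            mul_le_mul h2 h4 (Real.exp_pos _).le (by positivity)
        _ = 2 ^ (α/2) * h s := by rw [h3, hh]; ring
        _ ≤ 2 ^ (α/2) * (h s + h (t - s)) := by
            have := hnn (t - s) hts.le
            nlinarith
    · -- s > t/2 : bound by 2^(α/2) * h (t - s)
      have h1 : (t - s) / 2 ≤ s * (t - s) / t := by
        rw [div_le_div_iff₀ two_pos ht]; nlinarith
      have h2 : (s * (t - s) / t) ^ (-(α/2)) ≤ ((t - s)/2) ^ (-(α/2)) :=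
        Real.rpow_le_rpow_of_nonpos (by positivity) h1 hβ
      have h3 : ((t - s)/2:ℝ) ^ (-(α/2)) = 2 ^ (α/2) * (t - s) ^ (-(α/2)) := by
        rw [Real.div_rpow hts.le (by norm_num), Real.rpow_neg (by norm_num : (0:ℝ) ≤ 2),
          div_eq_mul_inv, inv_inv, mul_comm]
      calc (s * (t - s) / t) ^ (-(α/2)) * Real.exp (-ρ * (t - s))
          ≤ ((t - s)/2) ^ (-(α/2)) * Real.exp (-ρ * (t - s)) :=
            mul_le_mul_of_nonneg_right h2 (Real.exp_pos _).le
        _ = 2 ^ (α/2) * h (t - s) := by rw [h3, hh]; ring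
        _ ≤ 2 ^ (α/2) * (h s + h (t - s)) := by
            have := hnn s hs0.le
            nlinarith
  -- integrability on Ioo 0 t
  have hIntOn : IntegrableOn h (Ioo 0 t) := hInt.mono_set Ioo_subset_Ioi_self
  have hIntRev : IntegrableOn (fun s => h (t - s)) (Ioo 0 t) := by
    have h1 : IntervalIntegrable h volume 0 t :=
      (intervalIntegrable_iff_integrableOn_Ioc_of_le ht.le).mpr
        (hInt.mono_set Ioc_subset_Ioi_self)
    have h2 := h1.comp_sub_left t
    rw [sub_zero, sub_self] at h2
    exact ((intervalIntegrable_iff_integrableOn_Ioc_of_le ht.le).mp h2.symm).mono_set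
      Ioo_subset_Ioc_self
  have hIntBound : IntegrableOn (fun s => 2 ^ (α/2) * (h s + h (t - s))) (Ioo 0 t) :=
    (hIntOn.add hIntRev).const_mul _
  have hmeas : AEStronglyMeasurable
      (fun s : ℝ => (s * (t - s) / t) ^ (-(α/2)) * Real.exp (-ρ * (t - s)))
      (volume.restrict (Ioo 0 t)) := by
    apply Measurable.aestronglyMeasurable
    fun_prop
  have hIntf : IntegrableOn
      (fun s => (s * (t - s) / t) ^ (-(α/2)) * Real.exp (-ρ * (t - s))) (Ioo 0 t) := by
    refine hIntBound.mono' hmeas ?_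
    filter_upwards [ae_restrict_mem measurableSet_Ioo] with s hs
    have hb0 : (0:ℝ) ≤ s * (t - s) / t :=
      div_nonneg (mul_nonneg hs.1.le (by linarith [hs.2])) ht.le
    rw [Real.norm_eq_abs,
      abs_of_nonneg (mul_nonneg (Real.rpow_nonneg hb0 _) (Real.exp_pos _).le)]
    exact key s hs
  -- reversal of the integral
  have hrev : (∫ s in Ioo (0:ℝ) t, h (t - s)) = ∫ s in Ioo (0:ℝ) t, h s := by
    rw [← integral_Ioc_eq_integral_Ioo, ← intervalIntegral.integral_of_le ht.le,
      intervalIntegral.integral_comp_sub_left h t, sub_self, sub_zero,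
      intervalIntegral.integral_of_le ht.le, integral_Ioc_eq_integral_Ioo]
  have hmono : (∫ s in Ioo (0:ℝ) t, h s) ≤ ∫ s in Ioi (0:ℝ), h s := by
    refine setIntegral_mono_set hInt ?_ (HasSubset.Subset.eventuallyLE Ioo_subset_Ioi_self)
    filter_upwards [ae_restrict_mem measurableSet_Ioi] with s hs
    exact hnn s (le_of_lt hs)
  constructor
  · have h2pos : (0:ℝ) < 2 ^ (α/2) := Real.rpow_pos_of_pos two_pos _
    calc (∫ s in Ioo 0 t, (s * (t - s) / t) ^ (-(α/2)) * Real.exp (-ρ * (t - s)))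
        ≤ ∫ s in Ioo 0 t, 2 ^ (α/2) * (h s + h (t - s)) :=
          setIntegral_mono_on hIntf hIntBound measurableSet_Ioo key
      _ = 2 ^ (α/2) * ((∫ s in Ioo (0:ℝ) t, h s) + ∫ s in Ioo (0:ℝ) t, h (t - s)) := by
          rw [integral_const_mul, integral_add hIntOn hIntRev]
      _ = 2 ^ (α/2) * ((∫ s in Ioo (0:ℝ) t, h s) + ∫ s in Ioo (0:ℝ) t, h s) := by
          rw [hrev]
      _ ≤ 2 ^ (α/2) * ((∫ s in Ioi (0:ℝ), h s) + ∫ s in Ioi (0:ℝ), h s) := by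
          have := hmono; nlinarith
      _ = 2 ^ (1 + α/2) * ∫ s in Ioi (0:ℝ), h s := by
          rw [Real.rpow_add two_pos, Real.rpow_one]; ring
  · exact hval
end

section
/- Let h : ℝ^ℓ → ℂ be square-integrable with ‖h‖_{L²} = 1 and suppose ∫_{ℝ^ℓ} |ξ|² |h(ξ)|² dξ < ∞. Then for every ξ ∈ ℝ^ℓ, |ξ|² |h∗h(ξ)|² ≤ 4 ∫_{ℝ^ℓ} |ξ′|² |h(ξ′)|² dξ′. -/
open MeasureTheory Set Real
open scoped ENNReal

/-- If `h ∈ L²(ℝ^ℓ; ℂ)` with `‖h‖_{L²} = 1` and `∫ |ξ|²|h(ξ)|² dξ < ∞`, then for every `ξ`: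
`|ξ|² |h∗h(ξ)|² ≤ 4 ∫ |ξ′|² |h(ξ′)|² dξ′`. -/
theorem stmt3 {ℓ : ℕ} (h : EuclideanSpace ℝ (Fin ℓ) → ℂ)
    (hmeas : Measurable h) (hL2 : MemLp h 2 volume)
    (hnorm : (∫ x, ‖h x‖ ^ 2) = 1)
    (hmom : Integrable (fun ξ' => ‖ξ'‖ ^ 2 * ‖h ξ'‖ ^ 2))
    (ξ : EuclideanSpace ℝ (Fin ℓ)) :
    ‖ξ‖ ^ 2 * ‖∫ ξ', h (ξ - ξ') * h ξ'‖ ^ 2 ≤ 4 * ∫ ξ', ‖ξ'‖ ^ 2 * ‖h ξ'‖ ^ 2 := by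
  set M : ℝ := ∫ ξ', ‖ξ'‖ ^ 2 * ‖h ξ'‖ ^ 2 with hMdef
  have hM0 : 0 ≤ M := integral_nonneg fun x => by positivity
  have hmp : MeasurePreserving (fun x : EuclideanSpace ℝ (Fin ℓ) => ξ - x) volume volume :=
    Measure.measurePreserving_sub_left volume ξ
  have hemb : MeasurableEmbedding (fun x : EuclideanSpace ℝ (Fin ℓ) => ξ - x) :=
    (MeasurableEquiv.subLeft ξ).measurableEmbedding
  -- the four real L² functions
  have hn2 : MemLp (fun x : EuclideanSpace ℝ (Fin ℓ) => ‖h x‖) 2 volume := hL2.norm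
  have hg2 : MemLp (fun x : EuclideanSpace ℝ (Fin ℓ) => ‖x‖ * ‖h x‖) 2 volume := by
    rw [memLp_two_iff_integrable_sq
      (show AEStronglyMeasurable (fun x : EuclideanSpace ℝ (Fin ℓ) => ‖x‖ * ‖h x‖) volume from
        (measurable_norm.mul hmeas.norm).aestronglyMeasurable)]
    simpa [mul_pow] using hmom
  have hn2τ : MemLp (fun x : EuclideanSpace ℝ (Fin ℓ) => ‖h (ξ - x)‖) 2 volume :=
    hn2.comp_measurePreserving hmp
  have hg2τ : MemLp (fun x : EuclideanSpace ℝ (Fin ℓ) => ‖ξ - x‖ * ‖h (ξ - x)‖) 2 volume :=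
    hg2.comp_measurePreserving hmp
  -- integral identities
  have hInt_n2 : (∫ x : EuclideanSpace ℝ (Fin ℓ), ‖h x‖ ^ 2) = 1 := hnorm
  have hInt_g2 : (∫ x : EuclideanSpace ℝ (Fin ℓ), (‖x‖ * ‖h x‖) ^ 2) = M := by
    simp_rw [mul_pow]
    rfl
  have hInt_n2τ : (∫ x : EuclideanSpace ℝ (Fin ℓ), ‖h (ξ - x)‖ ^ 2) = 1 := by
    rw [hmp.integral_comp hemb fun y => ‖h y‖ ^ 2]; exact hnorm
  have hInt_g2τ : (∫ x : EuclideanSpace ℝ (Fin ℓ), (‖ξ - x‖ * ‖h (ξ - x)‖) ^ 2) = M := by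
    simp_rw [mul_pow]
    exact hmp.integral_comp hemb fun y => ‖y‖ ^ 2 * ‖h y‖ ^ 2
  -- Cauchy-Schwarz helper
  have CS : ∀ f g : EuclideanSpace ℝ (Fin ℓ) → ℝ, (∀ x, 0 ≤ f x) → (∀ x, 0 ≤ g x) →
      MemLp f 2 volume → MemLp g 2 volume →
      (∫ x, f x * g x) ≤ Real.sqrt (∫ x, f x ^ 2) * Real.sqrt (∫ x, g x ^ 2) := by
    intro f g hf0 hg0 hf hg
    have hpq : Real.HolderConjugate 2 2 := by constructor <;> norm_num
    have h2 : ENNReal.ofReal (2 : ℝ) = 2 := by norm_num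
    have := integral_mul_le_Lp_mul_Lq_of_nonneg hpq
      (Filter.Eventually.of_forall hf0) (Filter.Eventually.of_forall hg0)
      (by rw [h2]; exact hf) (by rw [h2]; exact hg)
    have hrpow : ∀ x : ℝ, x ^ (2 : ℝ) = x ^ 2 := fun x => by
      rw [show (2 : ℝ) = ((2 : ℕ) : ℝ) by norm_num, Real.rpow_natCast]
    simp_rw [hrpow] at this
    calc (∫ x, f x * g x)
        ≤ (∫ x, f x ^ 2) ^ (1 / 2 : ℝ) * (∫ x, g x ^ 2) ^ (1 / 2 : ℝ) := this
      _ = Real.sqrt (∫ x, f x ^ 2) * Real.sqrt (∫ x, g x ^ 2) := by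
          rw [Real.sqrt_eq_rpow, Real.sqrt_eq_rpow]
  -- integrability of the two product terms
  have hint1 : Integrable (fun x : EuclideanSpace ℝ (Fin ℓ) => (‖ξ - x‖ * ‖h (ξ - x)‖) * ‖h x‖) volume := by
    have := memLp_one_iff_integrable.mp
      (hn2.smul hg2τ (r := 1))
    simpa [Pi.smul_apply', smul_eq_mul, Pi.mul_def] using this
  have hint2 : Integrable (fun x : EuclideanSpace ℝ (Fin ℓ) => ‖h (ξ - x)‖ * (‖x‖ * ‖h x‖)) volume := by
    have := memLp_one_iff_integrable.mp
      (hg2.smul hn2τ (r := 1))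
    simpa [Pi.smul_apply', smul_eq_mul, Pi.mul_def] using this
  -- the key bound
  have key : ‖ξ‖ * ‖∫ ξ', h (ξ - ξ') * h ξ'‖ ≤ 2 * Real.sqrt M := by
    calc ‖ξ‖ * ‖∫ ξ', h (ξ - ξ') * h ξ'‖
        ≤ ‖ξ‖ * ∫ x, ‖h (ξ - x) * h x‖ :=
          mul_le_mul_of_nonneg_left (norm_integral_le_integral_norm _) (norm_nonneg ξ)
      _ = ∫ x, ‖ξ‖ * ‖h (ξ - x) * h x‖ := (integral_const_mul _ _).symm
      _ ≤ ∫ x, ((‖ξ - x‖ * ‖h (ξ - x)‖) * ‖h x‖ + ‖h (ξ - x)‖ * (‖x‖ * ‖h x‖)) := by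
          refine integral_mono_of_nonneg (Filter.Eventually.of_forall fun x => by positivity)
            (hint1.add hint2) (Filter.Eventually.of_forall fun x => ?_)
          have hxi : ‖ξ‖ ≤ ‖ξ - x‖ + ‖x‖ := by
            simpa using norm_add_le (ξ - x) x
          calc ‖ξ‖ * ‖h (ξ - x) * h x‖
              ≤ (‖ξ - x‖ + ‖x‖) * ‖h (ξ - x) * h x‖ :=
                mul_le_mul_of_nonneg_right hxi (norm_nonneg _)
            _ = (‖ξ - x‖ * ‖h (ξ - x)‖) * ‖h x‖ + ‖h (ξ - x)‖ * (‖x‖ * ‖h x‖) := by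
                rw [norm_mul]; ring
      _ = (∫ x, (‖ξ - x‖ * ‖h (ξ - x)‖) * ‖h x‖)
            + ∫ x, ‖h (ξ - x)‖ * (‖x‖ * ‖h x‖) := integral_add hint1 hint2
      _ ≤ Real.sqrt M * Real.sqrt 1 + Real.sqrt 1 * Real.sqrt M := by
          gcongr
          · calc (∫ x, (‖ξ - x‖ * ‖h (ξ - x)‖) * ‖h x‖)
                ≤ Real.sqrt (∫ x, (‖ξ - x‖ * ‖h (ξ - x)‖) ^ 2) *
                    Real.sqrt (∫ x, ‖h x‖ ^ 2) :=
                  CS _ _ (fun x => by positivity) (fun x => norm_nonneg _) hg2τ hn2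
              _ = Real.sqrt M * Real.sqrt 1 := by rw [hInt_g2τ, hInt_n2]
          · calc (∫ x, ‖h (ξ - x)‖ * (‖x‖ * ‖h x‖))
                ≤ Real.sqrt (∫ x, ‖h (ξ - x)‖ ^ 2) *
                    Real.sqrt (∫ x, (‖x‖ * ‖h x‖) ^ 2) :=
                  CS _ _ (fun x => norm_nonneg _) (fun x => by positivity) hn2τ hg2
              _ = Real.sqrt 1 * Real.sqrt M := by rw [hInt_n2τ, hInt_g2]
      _ = 2 * Real.sqrt M := by rw [Real.sqrt_one]; ring
  have hsq : (‖ξ‖ * ‖∫ ξ', h (ξ - ξ') * h ξ'‖) ^ 2 ≤ (2 * Real.sqrt M) ^ 2 := by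
    have h0 : 0 ≤ ‖ξ‖ * ‖∫ ξ', h (ξ - ξ') * h ξ'‖ := by positivity
    exact pow_le_pow_left₀ h0 key 2
  calc ‖ξ‖ ^ 2 * ‖∫ ξ', h (ξ - ξ') * h ξ'‖ ^ 2
      = (‖ξ‖ * ‖∫ ξ', h (ξ - ξ') * h ξ'‖) ^ 2 := by ring
    _ ≤ (2 * Real.sqrt M) ^ 2 := hsq
    _ = 4 * M := by rw [mul_pow, Real.sq_sqrt hM0]; ring
end

section
/- Let μ : ℝ^ℓ → [0,∞) be measurable with ∫_{ℝ^ℓ} μ(ξ)/(1+|ξ|²) dξ < ∞ (Dalang's condition). Define the Hartree energy in Fourier mode: E_H = sup over h ∈ A of { (2π)^{−ℓ} ∫ |h∗h(ξ)|² μ(ξ) dξ − ∫ |ξ|² |h(ξ)|² dξ }, where A = { h : ℝ^ℓ → ℂ : ‖h‖_{L²} = 1, ∫ |ξ|²|h(ξ)|² dξ < ∞, conj(h(ξ)) = h(−ξ) }. Then E_H < ∞; more precisely E_H ≤ (2π)^{−ℓ} ∫_{|ξ| ≤ R} μ(ξ) dξ for any R > 0 with 4(2π)^{−ℓ} ∫_{|ξ|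 > R} μ(ξ)/|ξ|² dξ < 1. -/
open MeasureTheory Set Real

-- Cauchy–Schwarz for integrals of nonneg functions
theorem myCS {α : Type*} [MeasurableSpace α] (ν : Measure α) (f g : α → ℝ)
    (hf0 : ∀ x, 0 ≤ f x) (hg0 : ∀ x, 0 ≤ g x)
    (hfm : AEStronglyMeasurable f ν) (hgm : AEStronglyMeasurable g ν)
    (hf2 : Integrable (fun x => f x ^ 2) ν) (hg2 : Integrable (fun x => g x ^ 2) ν) :
    ∫ x, f x * g x ∂ν ≤ (∫ x, f x ^ 2 ∂ν) ^ (1/2:ℝ) * (∫ x, g x ^ 2 ∂ν) ^ (1/2:ℝ) := by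
  have hpq : Real.HolderConjugate 2 2 := Real.holderConjugate_iff.mpr ⟨one_lt_two, by norm_num⟩
  have hf : MemLp f (ENNReal.ofReal 2) ν := by
    rw [show ENNReal.ofReal 2 = 2 by simp]
    exact (memLp_two_iff_integrable_sq hfm).mpr hf2
  have hg : MemLp g (ENNReal.ofReal 2) ν := by
    rw [show ENNReal.ofReal 2 = 2 by simp]
    exact (memLp_two_iff_integrable_sq hgm).mpr hg2
  have := integral_mul_le_Lp_mul_Lq_of_nonneg hpq (ae_of_all _ hf0) (ae_of_all _ hg0) hf hg
  simpa [Real.rpow_two] using this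

theorem myMulInt {α : Type*} [MeasurableSpace α] (ν : Measure α) (f g : α → ℝ)
    (hfm : AEStronglyMeasurable f ν) (hgm : AEStronglyMeasurable g ν)
    (hf2 : Integrable (fun x => f x ^ 2) ν) (hg2 : Integrable (fun x => g x ^ 2) ν) :
    Integrable (fun x => f x * g x) ν := by
  refine Integrable.mono' ((hf2.add hg2).div_const 2) (hfm.mul hgm) (ae_of_all _ fun x => ?_)
  have : |f x * g x| ≤ (f x ^ 2 + g x ^ 2) / 2 := by
    rcases abs_cases (f x * g x) with ⟨he, _⟩ | ⟨he, _⟩ <;> rw [he] <;>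
      nlinarith [sq_nonneg (f x - g x), sq_nonneg (f x + g x)]
  simpa [Real.norm_eq_abs, abs_mul] using this

set_option maxHeartbeats 1000000 in
/-- Under Dalang's condition, the Hartree energy in Fourier mode is finite: for any `R > 0`
with `4(2π)^{−ℓ} ∫_{|ξ|>R} μ(ξ)/|ξ|² dξ < 1`, every `h` in the admissible class `A` satisfies
`(2π)^{−ℓ} ∫ |h∗h(ξ)|² μ(ξ) dξ − ∫ |ξ|²|h(ξ)|² dξ ≤ (2π)^{−ℓ} ∫_{|ξ|≤R} μ(ξ) dξ`. -/
theorem stmt4 {ℓ : ℕ} (μ : EuclideanSpace ℝ (Fin ℓ) → ℝ)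
    (hμmeas : Measurable μ) (hμ0 : ∀ ξ, 0 ≤ μ ξ)
    (hDalang : Integrable (fun ξ => μ ξ / (1 + ‖ξ‖ ^ 2)))
    (R : ℝ) (hR : 0 < R)
    (hRsmall : 4 * (2 * π) ^ (-(ℓ:ℝ)) * (∫ ξ in {ξ | R < ‖ξ‖}, μ ξ / ‖ξ‖ ^ 2) < 1)
    (h : EuclideanSpace ℝ (Fin ℓ) → ℂ) (hhmeas : Measurable h) (hh : MemLp h 2 volume)
    (hhnorm : (∫ ξ, ‖h ξ‖ ^ 2) = 1)
    (hhmom : Integrable (fun ξ => ‖ξ‖ ^ 2 * ‖h ξ‖ ^ 2))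
    (hsym : ∀ ξ, starRingEnd ℂ (h ξ) = h (-ξ)) :
    (2 * π) ^ (-(ℓ:ℝ)) * (∫ ξ, ‖∫ ξ', h (ξ - ξ') * h ξ'‖ ^ 2 * μ ξ)
      - (∫ ξ, ‖ξ‖ ^ 2 * ‖h ξ‖ ^ 2)
      ≤ (2 * π) ^ (-(ℓ:ℝ)) * ∫ ξ in {ξ | ‖ξ‖ ≤ R}, μ ξ := by
  set c : ℝ := (2 * π) ^ (-(ℓ:ℝ)) with hc
  have hcpos : 0 < c := Real.rpow_pos_of_pos (by positivity) _
  set M : ℝ := ∫ ξ, ‖ξ‖ ^ 2 * ‖h ξ‖ ^ 2 with hMdef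
  have hM0 : 0 ≤ M := integral_nonneg fun ξ => by positivity
  -- measurability basics
  have hnm : AEStronglyMeasurable (fun ξ : EuclideanSpace ℝ (Fin ℓ) => ‖h ξ‖) volume :=
    hhmeas.norm.aestronglyMeasurable
  have hFmeas : Measurable (fun ξ : EuclideanSpace ℝ (Fin ℓ) => ‖ξ‖ * ‖h ξ‖) :=
    measurable_norm.mul hhmeas.norm
  have hn2 : Integrable (fun ξ : EuclideanSpace ℝ (Fin ℓ) => ‖h ξ‖ ^ 2) :=
    (memLp_two_iff_integrable_sq hnm).mp hh.norm
  have hF2 : Integrable (fun ξ : EuclideanSpace ℝ (Fin ℓ) => (‖ξ‖ * ‖h ξ‖) ^ 2) := by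
    simpa [mul_pow] using hhmom
  have mp : ∀ ξ : EuclideanSpace ℝ (Fin ℓ),
      MeasurePreserving (fun ξ' : EuclideanSpace ℝ (Fin ℓ) => ξ - ξ') volume volume :=
    fun ξ => Measure.measurePreserving_sub_left volume ξ
  have hn2t : ∀ ξ, Integrable (fun ξ' => ‖h (ξ - ξ')‖ ^ 2) := fun ξ => by
    have := ((mp ξ).integrable_comp hn2.aestronglyMeasurable).mpr hn2
    exact this
  have hF2t : ∀ ξ, Integrable (fun ξ' => (‖ξ - ξ'‖ * ‖h (ξ - ξ')‖) ^ 2) := fun ξ => by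
    have := ((mp ξ).integrable_comp hF2.aestronglyMeasurable).mpr hF2
    exact this
  have hnmt : ∀ ξ, AEStronglyMeasurable (fun ξ' : EuclideanSpace ℝ (Fin ℓ) => ‖h (ξ - ξ')‖) volume :=
    fun ξ => ((hhmeas.comp (measurable_const.sub measurable_id)).norm).aestronglyMeasurable
  have hFmt : ∀ ξ, AEStronglyMeasurable
      (fun ξ' : EuclideanSpace ℝ (Fin ℓ) => ‖ξ - ξ'‖ * ‖h (ξ - ξ')‖) volume :=
    fun ξ => (hFmeas.comp (measurable_const.sub measurable_id)).aestronglyMeasurable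
  have hint_n : ∀ ξ, (∫ ξ', ‖h (ξ - ξ')‖ ^ 2) = 1 := fun ξ => by
    rw [integral_sub_left_eq_self (fun ξ' : EuclideanSpace ℝ (Fin ℓ) => ‖h ξ'‖ ^ 2) volume ξ]
    exact hhnorm
  have hint_F : ∀ ξ, (∫ ξ', (‖ξ - ξ'‖ * ‖h (ξ - ξ')‖) ^ 2) = M := fun ξ => by
    rw [integral_sub_left_eq_self (fun ξ' : EuclideanSpace ℝ (Fin ℓ) => (‖ξ'‖ * ‖h ξ'‖) ^ 2) volume ξ]
    rw [hMdef]; congr 1; ext ξ'; ring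
  have hFM : (∫ ξ' : EuclideanSpace ℝ (Fin ℓ), (‖ξ'‖ * ‖h ξ'‖) ^ 2) = M := by
    rw [hMdef]; congr 1; ext ξ'; ring
  -- pointwise bound 1 : ‖K ξ‖ ≤ 1
  have hKbd : ∀ ξ, ‖∫ ξ', h (ξ - ξ') * h ξ'‖ ≤ ∫ ξ', ‖h (ξ - ξ')‖ * ‖h ξ'‖ := fun ξ => by
    simpa [norm_mul] using norm_integral_le_integral_norm (fun ξ' => h (ξ - ξ') * h ξ')
  have hK1 : ∀ ξ, ‖∫ ξ', h (ξ - ξ') * h ξ'‖ ≤ 1 := by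
    intro ξ
    calc ‖∫ ξ', h (ξ - ξ') * h ξ'‖ ≤ ∫ ξ', ‖h (ξ - ξ')‖ * ‖h ξ'‖ := hKbd ξ
      _ ≤ (∫ ξ', ‖h (ξ - ξ')‖ ^ 2) ^ (1/2:ℝ) * (∫ ξ', ‖h ξ'‖ ^ 2) ^ (1/2:ℝ) :=
          myCS volume _ _ (fun _ => norm_nonneg _) (fun _ => norm_nonneg _)
            (hnmt ξ) hnm (hn2t ξ) hn2
      _ = 1 := by rw [hint_n ξ, hhnorm]; norm_num
  -- pointwise bound 2
  have hK2 : ∀ ξ, ‖ξ‖ * ‖∫ ξ', h (ξ - ξ') * h ξ'‖ ≤ 2 * M ^ (1/2:ℝ) := by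
    intro ξ
    have I0 : Integrable (fun ξ' => ‖h (ξ - ξ')‖ * ‖h ξ'‖) :=
      myMulInt volume _ _ (hnmt ξ) hnm (hn2t ξ) hn2
    have I1 : Integrable (fun ξ' => (‖ξ - ξ'‖ * ‖h (ξ - ξ')‖) * ‖h ξ'‖) :=
      myMulInt volume _ _ (hFmt ξ) hnm (hF2t ξ) hn2
    have I2 : Integrable (fun ξ' => ‖h (ξ - ξ')‖ * (‖ξ'‖ * ‖h ξ'‖)) :=
      myMulInt volume _ _ (hnmt ξ) hFmeas.aestronglyMeasurable (hn2t ξ) hF2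
    have step1 : ‖ξ‖ * ‖∫ ξ', h (ξ - ξ') * h ξ'‖ ≤ ∫ ξ', ‖ξ‖ * (‖h (ξ - ξ')‖ * ‖h ξ'‖) := by
      rw [integral_const_mul]
      exact mul_le_mul_of_nonneg_left (hKbd ξ) (norm_nonneg ξ)
    have step2 : (∫ ξ', ‖ξ‖ * (‖h (ξ - ξ')‖ * ‖h ξ'‖))
        ≤ ∫ ξ', ((‖ξ - ξ'‖ * ‖h (ξ - ξ')‖) * ‖h ξ'‖ + ‖h (ξ - ξ')‖ * (‖ξ'‖ * ‖h ξ'‖)) := by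
      refine integral_mono (I0.const_mul _) (I1.add I2) fun ξ' => ?_
      have htri : ‖ξ‖ ≤ ‖ξ - ξ'‖ + ‖ξ'‖ := by
        simpa using norm_add_le (ξ - ξ') ξ'
      nlinarith [norm_nonneg (h (ξ - ξ')), norm_nonneg (h ξ'), norm_nonneg ξ',
        norm_nonneg (ξ - ξ'), mul_nonneg (norm_nonneg (h (ξ - ξ'))) (norm_nonneg (h ξ'))]
    rw [integral_add I1 I2] at step2
    have e1 : (∫ ξ', (‖ξ - ξ'‖ * ‖h (ξ - ξ')‖) * ‖h ξ'‖) ≤ M ^ (1/2:ℝ) := by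
      calc (∫ ξ', (‖ξ - ξ'‖ * ‖h (ξ - ξ')‖) * ‖h ξ'‖)
          ≤ (∫ ξ', (‖ξ - ξ'‖ * ‖h (ξ - ξ')‖) ^ 2) ^ (1/2:ℝ) * (∫ ξ', ‖h ξ'‖ ^ 2) ^ (1/2:ℝ) :=
            myCS volume _ _ (fun ξ' => mul_nonneg (norm_nonneg _) (norm_nonneg _))
              (fun _ => norm_nonneg _) (hFmt ξ) hnm (hF2t ξ) hn2
        _ = M ^ (1/2:ℝ) := by rw [hint_F ξ, hhnorm, Real.one_rpow, mul_one]
    have e2 : (∫ ξ', ‖h (ξ - ξ')‖ * (‖ξ'‖ * ‖h ξ'‖)) ≤ M ^ (1/2:ℝ) := by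
      calc (∫ ξ', ‖h (ξ - ξ')‖ * (‖ξ'‖ * ‖h ξ'‖))
          ≤ (∫ ξ', ‖h (ξ - ξ')‖ ^ 2) ^ (1/2:ℝ) * (∫ ξ', (‖ξ'‖ * ‖h ξ'‖) ^ 2) ^ (1/2:ℝ) :=
            myCS volume _ _ (fun _ => norm_nonneg _)
              (fun ξ' => mul_nonneg (norm_nonneg _) (norm_nonneg _))
              (hnmt ξ) hFmeas.aestronglyMeasurable (hn2t ξ) hF2
        _ = M ^ (1/2:ℝ) := by rw [hint_n ξ, hFM, Real.one_rpow, one_mul]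
    linarith
  have hsqrt : (M ^ (1/2:ℝ)) ^ 2 = M := by
    rw [← Real.rpow_natCast (M ^ (1/2:ℝ)) 2, ← Real.rpow_mul hM0]
    norm_num
  have hK2sq : ∀ ξ, R < ‖ξ‖ → ‖∫ ξ', h (ξ - ξ') * h ξ'‖ ^ 2 ≤ 4 * M / ‖ξ‖ ^ 2 := by
    intro ξ hξ
    have hpos : 0 < ‖ξ‖ := lt_trans hR hξ
    rw [le_div_iff₀ (by positivity)]
    have hKn : 0 ≤ ‖∫ ξ', h (ξ - ξ') * h ξ'‖ := norm_nonneg _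
    have hsq := pow_le_pow_left₀ (mul_nonneg (norm_nonneg ξ) hKn) (hK2 ξ) 2
    nlinarith [hsq, hsqrt]
  -- measurability of the main integrand
  have hKsm : StronglyMeasurable (fun ξ : EuclideanSpace ℝ (Fin ℓ) => ∫ ξ', h (ξ - ξ') * h ξ') :=
    (((hhmeas.comp (measurable_fst.sub measurable_snd)).mul
      (hhmeas.comp measurable_snd)).stronglyMeasurable).integral_prod_right'
  have hfm : AEStronglyMeasurable
      (fun ξ : EuclideanSpace ℝ (Fin ℓ) => ‖∫ ξ', h (ξ - ξ') * h ξ'‖ ^ 2 * μ ξ) volume :=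
    ((hKsm.measurable.norm.pow_const 2).mul hμmeas).aestronglyMeasurable
  -- sets
  have hsR : MeasurableSet {ξ : EuclideanSpace ℝ (Fin ℓ) | ‖ξ‖ ≤ R} :=
    measurableSet_le measurable_norm measurable_const
  have hcompl : {ξ : EuclideanSpace ℝ (Fin ℓ) | ‖ξ‖ ≤ R}ᶜ = {ξ | R < ‖ξ‖} := by
    ext ξ; simp [not_le]
  have hsR' : MeasurableSet {ξ : EuclideanSpace ℝ (Fin ℓ) | R < ‖ξ‖} := by
    rw [← hcompl]; exact hsR.compl
  -- integrability of μ on the ball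
  have hμball : IntegrableOn μ {ξ : EuclideanSpace ℝ (Fin ℓ) | ‖ξ‖ ≤ R} := by
    refine Integrable.mono' ((hDalang.const_mul (1 + R ^ 2)).integrableOn)
      hμmeas.aestronglyMeasurable.restrict ?_
    refine (ae_restrict_iff' hsR).2 (ae_of_all _ fun ξ hξ => ?_)
    have h1 : (0:ℝ) < 1 + ‖ξ‖ ^ 2 := by positivity
    have h2 : ‖ξ‖ ^ 2 ≤ R ^ 2 := pow_le_pow_left₀ (norm_nonneg ξ) hξ 2
    rw [Real.norm_of_nonneg (hμ0 ξ), ← mul_div_assoc, le_div_iff₀ h1]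
    nlinarith [hμ0 ξ]
  -- integrability of μ/‖ξ‖² off the ball
  have hμoff : IntegrableOn (fun ξ : EuclideanSpace ℝ (Fin ℓ) => μ ξ / ‖ξ‖ ^ 2)
      {ξ : EuclideanSpace ℝ (Fin ℓ) | R < ‖ξ‖} := by
    refine Integrable.mono' ((hDalang.const_mul (1 + R⁻¹ ^ 2)).integrableOn)
      ((hμmeas.div (measurable_norm.pow_const 2)).aestronglyMeasurable).restrict ?_
    refine (ae_restrict_iff' hsR').2 (ae_of_all _ fun ξ hξ => ?_)
    have hpos : 0 < ‖ξ‖ := lt_trans hR hξ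
    have h2 : R ^ 2 ≤ ‖ξ‖ ^ 2 := pow_le_pow_left₀ hR.le hξ.le 2
    have key : R⁻¹ ^ 2 * R ^ 2 = 1 := by field_simp
    rw [Real.norm_of_nonneg (div_nonneg (hμ0 ξ) (sq_nonneg _)), div_le_iff₀ (by positivity), ← mul_div_assoc,
      div_mul_eq_mul_div, le_div_iff₀ (by positivity)]
    have h3 : R⁻¹ ^ 2 * R ^ 2 * μ ξ ≤ R⁻¹ ^ 2 * ‖ξ‖ ^ 2 * μ ξ := by
      have := mul_le_mul_of_nonneg_left h2 (sq_nonneg R⁻¹)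
      exact mul_le_mul_of_nonneg_right this (hμ0 ξ)
    nlinarith [hμ0 ξ, h3]
  -- integrability of the main integrand
  have hf_ball : IntegrableOn
      (fun ξ => ‖∫ ξ', h (ξ - ξ') * h ξ'‖ ^ 2 * μ ξ) {ξ : EuclideanSpace ℝ (Fin ℓ) | ‖ξ‖ ≤ R} := by
    refine Integrable.mono' hμball hfm.restrict ?_
    refine (ae_restrict_iff' hsR).2 (ae_of_all _ fun ξ _ => ?_)
    have hKn : 0 ≤ ‖∫ ξ', h (ξ - ξ') * h ξ'‖ := norm_nonneg _
    have h1 : ‖∫ ξ', h (ξ - ξ') * h ξ'‖ ^ 2 ≤ 1 := by nlinarith [hK1 ξ]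
    rw [Real.norm_of_nonneg (mul_nonneg (by positivity) (hμ0 ξ))]
    calc ‖∫ ξ', h (ξ - ξ') * h ξ'‖ ^ 2 * μ ξ ≤ 1 * μ ξ :=
          mul_le_mul_of_nonneg_right h1 (hμ0 ξ)
      _ = μ ξ := one_mul _
  have hf_off : IntegrableOn
      (fun ξ => ‖∫ ξ', h (ξ - ξ') * h ξ'‖ ^ 2 * μ ξ) {ξ : EuclideanSpace ℝ (Fin ℓ) | R < ‖ξ‖} := by
    refine Integrable.mono' (hμoff.const_mul (4 * M)) hfm.restrict ?_
    refine (ae_restrict_iff' hsR').2 (ae_of_all _ fun ξ hξ => ?_)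
    have hb := mul_le_mul_of_nonneg_right (hK2sq ξ hξ) (hμ0 ξ)
    rw [Real.norm_of_nonneg (mul_nonneg (by positivity) (hμ0 ξ))]
    calc ‖∫ ξ', h (ξ - ξ') * h ξ'‖ ^ 2 * μ ξ ≤ 4 * M / ‖ξ‖ ^ 2 * μ ξ := hb
      _ = 4 * M * (μ ξ / ‖ξ‖ ^ 2) := by ring
  have hf_int : Integrable (fun ξ => ‖∫ ξ', h (ξ - ξ') * h ξ'‖ ^ 2 * μ ξ) := by
    have hu : IntegrableOn (fun ξ => ‖∫ ξ', h (ξ - ξ') * h ξ'‖ ^ 2 * μ ξ)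
        ({ξ : EuclideanSpace ℝ (Fin ℓ) | ‖ξ‖ ≤ R} ∪ {ξ | R < ‖ξ‖}) := hf_ball.union hf_off
    have huniv : ({ξ : EuclideanSpace ℝ (Fin ℓ) | ‖ξ‖ ≤ R} ∪ {ξ | R < ‖ξ‖}) = univ := by
      ext ξ; simp [le_or_gt]
    rwa [huniv, integrableOn_univ] at hu
  -- split the integral
  have hsplit : (∫ ξ, ‖∫ ξ', h (ξ - ξ') * h ξ'‖ ^ 2 * μ ξ)
      = (∫ ξ in {ξ | ‖ξ‖ ≤ R}, ‖∫ ξ', h (ξ - ξ') * h ξ'‖ ^ 2 * μ ξ)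
        + ∫ ξ in {ξ | R < ‖ξ‖}, ‖∫ ξ', h (ξ - ξ') * h ξ'‖ ^ 2 * μ ξ := by
    rw [← integral_add_compl hsR hf_int, hcompl]
  have hb1 : (∫ ξ in {ξ | ‖ξ‖ ≤ R}, ‖∫ ξ', h (ξ - ξ') * h ξ'‖ ^ 2 * μ ξ)
      ≤ ∫ ξ in {ξ | ‖ξ‖ ≤ R}, μ ξ := by
    refine setIntegral_mono_on hf_ball hμball hsR fun ξ _ => ?_
    have hKn : 0 ≤ ‖∫ ξ', h (ξ - ξ') * h ξ'‖ := norm_nonneg _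
    have h1 : ‖∫ ξ', h (ξ - ξ') * h ξ'‖ ^ 2 ≤ 1 := by nlinarith [hK1 ξ]
    calc ‖∫ ξ', h (ξ - ξ') * h ξ'‖ ^ 2 * μ ξ ≤ 1 * μ ξ :=
          mul_le_mul_of_nonneg_right h1 (hμ0 ξ)
      _ = μ ξ := one_mul _
  have hb2 : (∫ ξ in {ξ | R < ‖ξ‖}, ‖∫ ξ', h (ξ - ξ') * h ξ'‖ ^ 2 * μ ξ)
      ≤ 4 * M * ∫ ξ in {ξ | R < ‖ξ‖}, μ ξ / ‖ξ‖ ^ 2 := by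
    rw [← integral_const_mul]
    refine setIntegral_mono_on hf_off (hμoff.const_mul (4 * M)) hsR' fun ξ hξ => ?_
    have hb := mul_le_mul_of_nonneg_right (hK2sq ξ hξ) (hμ0 ξ)
    calc ‖∫ ξ', h (ξ - ξ') * h ξ'‖ ^ 2 * μ ξ ≤ 4 * M / ‖ξ‖ ^ 2 * μ ξ := hb
      _ = 4 * M * (μ ξ / ‖ξ‖ ^ 2) := by ring
  rw [hsplit]
  nlinarith [mul_le_mul_of_nonneg_left hb1 hcpos.le, mul_le_mul_of_nonneg_left hb2 hcpos.le,
    mul_le_mul_of_nonneg_right hRsmall.le hM0, hM0, hcpos]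
end

section
/- Let α ∈ (0,2) and suppose γ : ℝ^ℓ → [0,∞] is measurable, satisfies the scaling relation γ(cx) = c^{−α} γ(x) for all c > 0 and x ∈ ℝ^ℓ, and that the Hartree energy E_H(γ) := sup_{g ∈ G} { ∬ γ(x−y)g²(x)g²(y)dxdy − ∫|∇g|²dx } is finite, where G = { g ∈ W^{1,2}(ℝ^ℓ) : ‖g‖_{L²}=1 }. Then for all g ∈ W^{1,2}(ℝ^ℓ): ∬ γ(x−y) g²(x) g²(y) dx dy ≤ κ ( ∫|g|²dx )^{2−α/2} ( ∫|∇g|²dx )^{α/2}, where κ = (2/α)( (α/(2−α)) E_H(γ) )^{(2−α)/2}. -/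
open MeasureTheory Set Real

set_option maxHeartbeats 1000000 in
/-- If `γ ≥ 0` is `(−α)`-homogeneous and the Hartree energy is finite (bounded above by `EH`),
then the interpolation inequality
`∬ γ(x−y)g²(x)g²(y) ≤ κ (∫ g²)^{2−α/2} (∫ |∇g|²)^{α/2}` holds for all `g ∈ W^{1,2}`,
with `κ = (2/α)((α/(2−α)) EH)^{(2−α)/2}`. -/
theorem stmt6 {ℓ : ℕ} (α : ℝ) (hα : α ∈ Ioo (0:ℝ) 2)
    (γ : EuclideanSpace ℝ (Fin ℓ) → ℝ) (hγ0 : ∀ x, 0 ≤ γ x)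
    (hscal : ∀ c > (0:ℝ), ∀ x, γ (c • x) = c ^ (-α) * γ x)
    (EH : ℝ)
    (hEH : ∀ g : EuclideanSpace ℝ (Fin ℓ) → ℝ, Differentiable ℝ g → MemLp g 2 volume →
      (∫ x, (g x) ^ 2) = 1 → Integrable (fun x => ‖fderiv ℝ g x‖ ^ 2) →
      (∫ x, ∫ y, γ (x - y) * (g x) ^ 2 * (g y) ^ 2) - (∫ x, ‖fderiv ℝ g x‖ ^ 2) ≤ EH) :
    ∀ g : EuclideanSpace ℝ (Fin ℓ) → ℝ, Differentiable ℝ g → MemLp g 2 volume →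
      Integrable (fun x => ‖fderiv ℝ g x‖ ^ 2) →
      (∫ x, ∫ y, γ (x - y) * (g x) ^ 2 * (g y) ^ 2)
        ≤ (2/α) * ((α/(2-α)) * EH) ^ ((2-α)/2)
          * (∫ x, (g x) ^ 2) ^ (2 - α/2) * (∫ x, ‖fderiv ℝ g x‖ ^ 2) ^ (α/2) := by
  obtain ⟨hα0, hα2⟩ := hα
  have hα2' : (0:ℝ) < 2 - α := by linarith
  intro g hg hg2 hgrad
  set N := ∫ x, (g x) ^ 2 with hNdef
  set T := ∫ x, ‖fderiv ℝ g x‖ ^ 2 with hTdef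
  set D := ∫ x, ∫ y, γ (x - y) * (g x) ^ 2 * (g y) ^ 2 with hDdef
  have hN0 : 0 ≤ N := integral_nonneg fun x => sq_nonneg _
  have hT0 : 0 ≤ T := integral_nonneg fun x => sq_nonneg _
  have hD0 : 0 ≤ D := by
    apply integral_nonneg
    intro x
    exact integral_nonneg fun y =>
      mul_nonneg (mul_nonneg (hγ0 _) (sq_nonneg _)) (sq_nonneg _)
  clear_value N T D
  -- helper: scaling of integrals
  have scale : ∀ (f : EuclideanSpace ℝ (Fin ℓ) → ℝ) {θ : ℝ}, 0 < θ →
      (∫ x, f (θ • x)) = (θ ^ ℓ)⁻¹ * ∫ x, f x := by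
    intro f θ hθ
    rw [MeasureTheory.Measure.integral_comp_smul_of_nonneg volume f θ (hR := hθ.le)]
    simp [finrank_euclideanSpace_fin, smul_eq_mul]
  rcases eq_or_lt_of_le hN0 with hN | hN
  · -- N = 0 : both sides vanish
    have hgsq : Integrable (fun x => (g x) ^ 2) := hg2.integrable_sq
    have hzero : (fun x => (g x) ^ 2) =ᵐ[volume] 0 := by
      rw [← integral_eq_zero_iff_of_nonneg_ae
        (Filter.Eventually.of_forall fun x => sq_nonneg _) hgsq]
      rw [← hNdef]; exact hN.symm
    have hDz : D = 0 := by
      have step : ∀ x : EuclideanSpace ℝ (Fin ℓ),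
          (∫ y, γ (x - y) * (g x) ^ 2 * (g y) ^ 2) = 0 := by
        intro x
        have : (fun y => γ (x - y) * (g x) ^ 2 * (g y) ^ 2) =ᵐ[volume] 0 := by
          filter_upwards [hzero] with y hy
          simp only [Pi.zero_apply] at hy ⊢
          rw [hy, mul_zero]
        rw [integral_congr_ae this]; simp
      rw [hDdef]
      simp only [step, integral_zero]
    rw [hDz, ← hN, Real.zero_rpow (by intro h; nlinarith), mul_zero, zero_mul]
  · -- N > 0
    -- the key scaling inequality
    have key : ∀ θ : ℝ, 0 < θ → θ ^ α * D ≤ EH * N ^ 2 + θ ^ 2 * (N * T) := by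
      intro θ hθ
      have hθℓ : (0:ℝ) < θ ^ ℓ := pow_pos hθ ℓ
      set s : ℝ := Real.sqrt (θ ^ ℓ / N) with hsdef
      have hs2 : s ^ 2 = θ ^ ℓ / N := Real.sq_sqrt (by positivity)
      have hspos : 0 < s := Real.sqrt_pos.2 (by positivity)
      set gθ : EuclideanSpace ℝ (Fin ℓ) → ℝ := fun x => s * g (θ • x) with hgθdef
      have hsm : Differentiable ℝ (fun x : EuclideanSpace ℝ (Fin ℓ) => θ • x) :=
        differentiable_id.const_smul θ
      have hgθdiff : Differentiable ℝ gθ := (hg.comp hsm).const_mul s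
      -- pointwise derivative formula
      have hfd : ∀ x, ‖fderiv ℝ gθ x‖ ^ 2 = s ^ 2 * θ ^ 2 * ‖fderiv ℝ g (θ • x)‖ ^ 2 := by
        intro x
        have h1 : fderiv ℝ gθ x = s • fderiv ℝ (fun x => g (θ • x)) x :=
          fderiv_const_mul ((hg _).comp x (hsm x)) s
        have h2 : fderiv ℝ (fun x => g (θ • x)) x =
            (fderiv ℝ g (θ • x)).comp
              (fderiv ℝ (fun x : EuclideanSpace ℝ (Fin ℓ) => θ • x) x) :=
          fderiv_comp x (hg _) (hsm x)
        have h3 : fderiv ℝ (fun x : EuclideanSpace ℝ (Fin ℓ) => θ • x) x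
            = θ • ContinuousLinearMap.id ℝ (EuclideanSpace ℝ (Fin ℓ)) := by
          rw [fderiv_fun_const_smul differentiableAt_fun_id, fderiv_fun_id]
        rw [h1, h2, h3, ContinuousLinearMap.comp_smul, ContinuousLinearMap.comp_id]
        rw [norm_smul, norm_smul]
        simp only [Real.norm_eq_abs, mul_pow, sq_abs]
        ring
      -- membership in L²
      have hint_sq : Integrable (fun x => (g (θ • x)) ^ 2) :=
        (hg2.integrable_sq).comp_smul hθ.ne'
      have hgθ_sq_int : Integrable (fun x => (gθ x) ^ 2) := by
        have h := hint_sq.const_mul (s ^ 2)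
        refine h.congr (Filter.Eventually.of_forall fun x => ?_)
        simp only [hgθdef, mul_pow]
      have hgθmem : MemLp gθ 2 volume :=
        (memLp_two_iff_integrable_sq hgθdiff.continuous.aestronglyMeasurable).2 hgθ_sq_int
      -- normalization
      have hnorm : (∫ x, (gθ x) ^ 2) = 1 := by
        calc (∫ x, (gθ x) ^ 2) = ∫ x, s ^ 2 * (g (θ • x)) ^ 2 := by
              simp only [hgθdef, mul_pow]
          _ = s ^ 2 * ∫ x, (g (θ • x)) ^ 2 := integral_const_mul _ _
          _ = s ^ 2 * ((θ ^ ℓ)⁻¹ * ∫ x, (g x) ^ 2) := by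
              rw [show (∫ x, (g (θ • x)) ^ 2) = (θ ^ ℓ)⁻¹ * ∫ x, (g x) ^ 2 from
                scale (fun z => (g z) ^ 2) hθ]
          _ = 1 := by rw [← hNdef, hs2]; field_simp
      -- integrability of the gradient term
      have hgradθ : Integrable (fun x => ‖fderiv ℝ gθ x‖ ^ 2) := by
        have h1 : Integrable (fun x => s ^ 2 * θ ^ 2 * ‖fderiv ℝ g (θ • x)‖ ^ 2) :=
          (hgrad.comp_smul hθ.ne').const_mul _
        exact h1.congr (Filter.Eventually.of_forall fun x => (hfd x).symm)
      -- value of the gradient term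
      have hgradval : (∫ x, ‖fderiv ℝ gθ x‖ ^ 2) = θ ^ 2 * T / N := by
        calc (∫ x, ‖fderiv ℝ gθ x‖ ^ 2)
            = ∫ x, s ^ 2 * θ ^ 2 * ‖fderiv ℝ g (θ • x)‖ ^ 2 := by simp only [hfd]
          _ = s ^ 2 * θ ^ 2 * ∫ x, ‖fderiv ℝ g (θ • x)‖ ^ 2 := integral_const_mul _ _
          _ = s ^ 2 * θ ^ 2 * ((θ ^ ℓ)⁻¹ * ∫ x, ‖fderiv ℝ g x‖ ^ 2) := by
              rw [show (∫ x, ‖fderiv ℝ g (θ • x)‖ ^ 2)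
                  = (θ ^ ℓ)⁻¹ * ∫ x, ‖fderiv ℝ g x‖ ^ 2 from
                scale (fun z => ‖fderiv ℝ g z‖ ^ 2) hθ]
          _ = θ ^ 2 * T / N := by rw [← hTdef, hs2]; field_simp
      -- representation of D
      set h : EuclideanSpace ℝ (Fin ℓ) → ℝ := fun w => ∫ z, γ (w - z) * (g z) ^ 2 with hhdef
      have hDrep : D = ∫ x, (g x) ^ 2 * h x := by
        have step : ∀ x : EuclideanSpace ℝ (Fin ℓ),
            (∫ y, γ (x - y) * (g x) ^ 2 * (g y) ^ 2) = (g x) ^ 2 * h x := by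
          intro x
          calc (∫ y, γ (x - y) * (g x) ^ 2 * (g y) ^ 2)
              = ∫ y, (g x) ^ 2 * (γ (x - y) * (g y) ^ 2) := by
                congr 1; funext y; ring
            _ = (g x) ^ 2 * h x := integral_const_mul _ _
        rw [hDdef]
        simp only [step]
      -- value of the interaction term
      have hDθ : (∫ x, ∫ y, γ (x - y) * (gθ x) ^ 2 * (gθ y) ^ 2) = θ ^ α * D / N ^ 2 := by
        have hinvα : (θ⁻¹ : ℝ) ^ (-α) = θ ^ α := by
          rw [Real.inv_rpow hθ.le, Real.rpow_neg hθ.le, inv_inv]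
        have e2 : ∀ x y : EuclideanSpace ℝ (Fin ℓ),
            γ (x - y) = θ ^ α * γ (θ • x - θ • y) := by
          intro x y
          have hxy : x - y = θ⁻¹ • (θ • x - θ • y) := by
            rw [smul_sub, smul_smul, smul_smul, inv_mul_cancel₀ hθ.ne', one_smul, one_smul]
          rw [hxy, hscal θ⁻¹ (by positivity) _, hinvα]
        have inner : ∀ x : EuclideanSpace ℝ (Fin ℓ),
            (∫ y, γ (x - y) * (gθ x) ^ 2 * (gθ y) ^ 2)
              = (gθ x) ^ 2 * s ^ 2 * ((θ ^ ℓ)⁻¹ * (θ ^ α * h (θ • x))) := by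
          intro x
          calc (∫ y, γ (x - y) * (gθ x) ^ 2 * (gθ y) ^ 2)
              = ∫ y, (gθ x) ^ 2 * s ^ 2 * (θ ^ α * (γ (θ • x - θ • y) * (g (θ • y)) ^ 2)) := by
                congr 1; funext y
                rw [e2 x y]
                simp only [hgθdef, mul_pow]
                ring
            _ = (gθ x) ^ 2 * s ^ 2 * ∫ y, θ ^ α * (γ (θ • x - θ • y) * (g (θ • y)) ^ 2) :=
                integral_const_mul _ _
            _ = (gθ x) ^ 2 * s ^ 2 * ((θ ^ ℓ)⁻¹ * ∫ z, θ ^ α * (γ (θ • x - z) * (g z) ^ 2)) := by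
                rw [show (∫ y, θ ^ α * (γ (θ • x - θ • y) * (g (θ • y)) ^ 2))
                    = (θ ^ ℓ)⁻¹ * ∫ z, θ ^ α * (γ (θ • x - z) * (g z) ^ 2) from
                  scale (fun z => θ ^ α * (γ (θ • x - z) * (g z) ^ 2)) hθ]
            _ = (gθ x) ^ 2 * s ^ 2 * ((θ ^ ℓ)⁻¹ * (θ ^ α * h (θ • x))) := by
                rw [integral_const_mul]
        calc (∫ x, ∫ y, γ (x - y) * (gθ x) ^ 2 * (gθ y) ^ 2)
            = ∫ x, s ^ 4 * (θ ^ ℓ)⁻¹ * θ ^ α * ((g (θ • x)) ^ 2 * h (θ • x)) := by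
              congr 1; funext x
              rw [inner x]
              simp only [hgθdef, mul_pow]
              ring
          _ = s ^ 4 * (θ ^ ℓ)⁻¹ * θ ^ α * ∫ x, (g (θ • x)) ^ 2 * h (θ • x) :=
              integral_const_mul _ _
          _ = s ^ 4 * (θ ^ ℓ)⁻¹ * θ ^ α * ((θ ^ ℓ)⁻¹ * ∫ z, (g z) ^ 2 * h z) := by
              rw [show (∫ x, (g (θ • x)) ^ 2 * h (θ • x))
                  = (θ ^ ℓ)⁻¹ * ∫ z, (g z) ^ 2 * h z from
                scale (fun z => (g z) ^ 2 * h z) hθ]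
          _ = θ ^ α * D / N ^ 2 := by
              rw [← hDrep, show (s:ℝ) ^ 4 = (s ^ 2) ^ 2 by ring, hs2]
              field_simp
      -- apply the Hartree bound
      have happ := hEH gθ hgθdiff hgθmem hnorm hgradθ
      rw [hDθ, hgradval] at happ
      have hN2 : (0:ℝ) < N ^ 2 := by positivity
      have h3 : θ ^ α * D / N ^ 2 ≤ EH + θ ^ 2 * T / N := by linarith
      calc θ ^ α * D = (θ ^ α * D / N ^ 2) * N ^ 2 := by field_simp
        _ ≤ (EH + θ ^ 2 * T / N) * N ^ 2 := mul_le_mul_of_nonneg_right h3 hN2.le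
        _ = EH * N ^ 2 + θ ^ 2 * (N * T) := by field_simp
    -- EH is nonnegative
    have hEH0 : 0 ≤ EH := by
      by_contra hneg
      push_neg at hneg
      have hc : 0 < -(EH * N ^ 2) := by nlinarith [pow_pos hN 2]
      obtain ⟨M, hMdef⟩ : ∃ M : ℝ, M = N * T := ⟨_, rfl⟩
      have hM : 0 ≤ M := by rw [hMdef]; exact mul_nonneg hN.le hT0
      obtain ⟨θ, hθpos, hθ2⟩ : ∃ θ : ℝ, 0 < θ ∧ θ ^ 2 = -(EH * N ^ 2) / (2 * (M + 1)) :=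
        ⟨Real.sqrt (-(EH * N ^ 2) / (2 * (M + 1))), Real.sqrt_pos.2 (by positivity),
          Real.sq_sqrt (by positivity)⟩
      have hk := key θ hθpos
      rw [← hMdef] at hk
      have hl : 0 ≤ θ ^ α * D := mul_nonneg (Real.rpow_nonneg hθpos.le α) hD0
      rw [hθ2] at hk
      have h5 : (0:ℝ) < 2 * (M + 1) := by linarith
      have h4 : -(EH * N ^ 2) ≤ -(EH * N ^ 2) / (2 * (M + 1)) * M := by linarith
      rw [div_mul_eq_mul_div, le_div_iff₀ h5] at h4
      nlinarith [mul_nonneg hc.le hM]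
    rcases eq_or_lt_of_le hT0 with hT | hT
    · -- T = 0 : both sides vanish
      have hD_le : D ≤ 0 := by
        by_contra hD
        push_neg at hD
        have hB0 : 0 ≤ EH * N ^ 2 := by positivity
        have hbase : 0 < (EH * N ^ 2 + D) / D := by positivity
        obtain ⟨θ, hθpos, hθα⟩ : ∃ θ : ℝ, 0 < θ ∧ θ ^ α = (EH * N ^ 2 + D) / D :=
          ⟨((EH * N ^ 2 + D) / D) ^ (α⁻¹ : ℝ), Real.rpow_pos_of_pos hbase _, by
            rw [← Real.rpow_mul hbase.le, inv_mul_cancel₀ hα0.ne', Real.rpow_one]⟩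
        have hk := key θ hθpos
        rw [hθα, ← hT, mul_zero, mul_zero, add_zero, div_mul_cancel₀ _ hD.ne'] at hk
        linarith
      rw [← hT, Real.zero_rpow (by positivity), mul_zero]
      exact hD_le
    · rcases eq_or_lt_of_le hEH0 with hEH' | hEH'
      · -- EH = 0 : both sides vanish
        have hD_le : D ≤ 0 := by
          by_contra hD
          push_neg at hD
          have hNT : (0:ℝ) < N * T := mul_pos hN hT
          have hbase : 0 < D / (2 * (N * T)) := by positivity
          obtain ⟨θ, hθpos, hθ2α⟩ : ∃ θ : ℝ, 0 < θ ∧ θ ^ (2 - α) = D / (2 * (N * T)) :=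
            ⟨(D / (2 * (N * T))) ^ ((2 - α)⁻¹ : ℝ), Real.rpow_pos_of_pos hbase _, by
              rw [← Real.rpow_mul hbase.le, inv_mul_cancel₀ hα2'.ne', Real.rpow_one]⟩
          have hsplit : (θ:ℝ) ^ (2:ℕ) = θ ^ α * θ ^ (2 - α) := by
            rw [← Real.rpow_natCast θ 2, ← Real.rpow_add hθpos]
            norm_num
          have hk := key θ hθpos
          rw [← hEH', zero_mul, zero_add, hsplit, hθ2α] at hk
          have hθαpos : 0 < θ ^ α := Real.rpow_pos_of_pos hθpos _
          have : θ ^ α * D ≤ θ ^ α * (D / 2) := by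
            calc θ ^ α * D ≤ θ ^ α * (D / (2 * (N * T))) * (N * T) := hk
              _ = θ ^ α * (D / 2) := by field_simp
          have := le_of_mul_le_mul_left this hθαpos
          linarith
        rw [← hEH', mul_zero, Real.zero_rpow (by positivity), mul_zero, zero_mul, zero_mul]
        exact hD_le
      · -- main case : EH > 0, T > 0, N > 0
        obtain ⟨A, hAdef⟩ : ∃ A : ℝ, A = α / (2 - α) * EH := ⟨_, rfl⟩
        have hA : 0 < A := by rw [hAdef]; positivity
        obtain ⟨u, hudef⟩ : ∃ u : ℝ, u = A * N / T := ⟨_, rfl⟩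
        have hu : 0 < u := by rw [hudef]; positivity
        obtain ⟨θ, hθpos, hθ2, hθα⟩ :
            ∃ θ : ℝ, 0 < θ ∧ (θ:ℝ) ^ (2:ℕ) = u ∧ θ ^ α = u ^ (α / 2) :=
          ⟨u ^ ((2:ℝ)⁻¹), Real.rpow_pos_of_pos hu _, by
            rw [← Real.rpow_natCast (u ^ ((2:ℝ)⁻¹)) 2, ← Real.rpow_mul hu.le]; norm_num, by
            rw [← Real.rpow_mul hu.le]; congr 1; ring⟩
        have hk := key θ hθpos
        rw [hθ2, hθα, hudef] at hk
        have huNT : A * N / T * (N * T) = A * N ^ 2 := by field_simp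
        rw [huNT] at hk
        -- hk : (A*N/T)^(α/2) * D ≤ EH*N^2 + A*N^2
        have hpow : ((A * N / T) ^ (α / 2) : ℝ) = A ^ (α/2) * N ^ (α/2) / T ^ (α/2) := by
          rw [Real.div_rpow (by positivity) hT.le, Real.mul_rpow hA.le hN.le]
        have hppos : (0:ℝ) < A ^ (α/2) * N ^ (α/2) / T ^ (α/2) := by
          have h1 : (0:ℝ) < A ^ (α/2) := Real.rpow_pos_of_pos hA _
          have h2 : (0:ℝ) < N ^ (α/2) := Real.rpow_pos_of_pos hN _
          have h3 : (0:ℝ) < T ^ (α/2) := Real.rpow_pos_of_pos hT _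
          positivity
        rw [hpow] at hk
        have h1 : (0:ℝ) < A ^ (α/2) := Real.rpow_pos_of_pos hA _
        have h2 : (0:ℝ) < N ^ (α/2) := Real.rpow_pos_of_pos hN _
        have h3 : (0:ℝ) < T ^ (α/2) := Real.rpow_pos_of_pos hT _
        have hD_le : D ≤ (EH * N ^ 2 + A * N ^ 2) * (T ^ (α/2) / (A ^ (α/2) * N ^ (α/2))) := by
          have hmul := mul_le_mul_of_nonneg_right hk
            (le_of_lt (div_pos h3 (mul_pos h1 h2)))
          calc D = A ^ (α/2) * N ^ (α/2) / T ^ (α/2) * D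
                * (T ^ (α/2) / (A ^ (α/2) * N ^ (α/2))) := by
                field_simp
            _ ≤ (EH * N ^ 2 + A * N ^ 2) * (T ^ (α/2) / (A ^ (α/2) * N ^ (α/2))) := hmul
        have hEq : (EH * N ^ 2 + A * N ^ 2) * (T ^ (α/2) / (A ^ (α/2) * N ^ (α/2)))
            = (2/α) * A ^ ((2-α)/2) * N ^ (2 - α/2) * T ^ (α/2) := by
          rw [show ((2-α)/2 : ℝ) = 1 - α/2 by ring, Real.rpow_sub hA, Real.rpow_one,
            Real.rpow_sub hN, Real.rpow_two, hAdef]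
          field_simp
          ring
        rw [← hAdef, ← hEq]
        exact hD_le
end

section
/- Let α ∈ (0,2) and suppose γ satisfies γ(cx) = c^{−α}γ(x) for c > 0. Define E_H(γ) = sup_{g∈G}{ ∬γ(x−y)g²(x)g²(y)dxdy − ∫|∇g|²dx } and M(γ) = sup_{g∈G}{ (∬γ(x−y)g²(x)g²(y)dxdy)^{1/2} − (1/2)∫|∇g|²dx }, where G = {g ∈ W^{1,2}(ℝ^ℓ) : ‖g‖_{L²}=1}. Then E_H(γ) is finite if and only if M(γ) is finite, and in that case M(γ) = ((4−α)/4) ( 2 E_H(γ)/(2−α) )^{(2−α)/(4−α)}. -/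
open MeasureTheory Set Real

namespace Stmt9Aux

lemma lemA {α : ℝ} (h0 : 0 < α) (h2 : α < 2) {A B E : ℝ} (hA : 0 ≤ A) (hB : 0 ≤ B)
    (hE : 0 ≤ E) (h : ∀ c : ℝ, 0 < c → c ^ α * A - c ^ 2 * B ≤ E) :
    A ^ ((1:ℝ)/2) - (1/2) * B ≤ ((4-α)/4) * (2*E/(2-α)) ^ ((2-α)/(4-α)) := by
  have h2' : (0:ℝ) < 2 - α := by linarith
  have h4' : (0:ℝ) < 4 - α := by linarith
  have hEdiv : 0 ≤ 2*E/(2-α) := by positivity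
  have hF : 0 ≤ ((4-α)/4) * (2*E/(2-α)) ^ ((2-α)/(4-α)) := by positivity
  rcases eq_or_lt_of_le hA with hA0 | hA0
  · rw [← hA0, Real.zero_rpow (by norm_num)]
    linarith
  -- B > 0
  have hBpos : 0 < B := by
    by_contra hB0
    push_neg at hB0
    have hB0 : B = 0 := le_antisymm hB0 hB
    set c : ℝ := ((E+1)/A) ^ (α⁻¹) with hc
    have hcpos : 0 < c := rpow_pos_of_pos (by positivity) _
    have hcα : c ^ α = (E+1)/A := Real.rpow_inv_rpow (by positivity) h0.ne'
    have := h c hcpos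
    rw [hcα, hB0, div_mul_cancel₀ _ hA0.ne'] at this
    linarith
  -- E > 0
  have hEpos : 0 < E := by
    by_contra hE0
    push_neg at hE0
    have hE0 : E = 0 := le_antisymm hE0 hE
    set c : ℝ := (A/(2*B)) ^ ((2-α)⁻¹) with hc
    have hcpos : 0 < c := rpow_pos_of_pos (by positivity) _
    have hc2α : c ^ (2-α) = A/(2*B) := Real.rpow_inv_rpow (by positivity) h2'.ne'
    have hsplit : (c:ℝ) ^ (2:ℕ) = c ^ α * c ^ (2-α) := by
      rw [← Real.rpow_natCast c 2, ← Real.rpow_add hcpos]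
      norm_num
    have := h c hcpos
    rw [hE0, hsplit, hc2α] at this
    have hcα : 0 < c ^ α := rpow_pos_of_pos hcpos _
    have h3 : A ≤ A/(2*B) * B := by
      nlinarith [mul_pos hcα (mul_pos (div_pos hA0 (by positivity)) hBpos)]
    have heq : A/(2*B) * B = A/2 := by field_simp
    rw [heq] at h3
    linarith
  have hEdivpos : 0 < 2*E/(2-α) := by positivity
  -- main case
  set q : ℝ := α*E/((2-α)*B) with hq
  have hqpos : 0 < q := by positivity
  set c : ℝ := Real.sqrt q with hc
  have hcpos : 0 < c := Real.sqrt_pos.2 hqpos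
  have hc2 : (c:ℝ) ^ (2:ℕ) = q := Real.sq_sqrt hqpos.le
  have hkey : c ^ α * A ≤ 2*E/(2-α) := by
    have h5 := h c hcpos
    have hq2 : q * B = α*E/(2-α) := by
      rw [hq, div_mul_eq_mul_div, div_eq_div_iff (by positivity) (by positivity)]
      ring
    have h6 : c ^ α * A ≤ E + q * B := by nlinarith
    rw [hq2] at h6
    calc c ^ α * A ≤ E + α*E/(2-α) := h6
      _ = 2*E/(2-α) := by field_simp; ring
  have hcα : 0 < c ^ α := rpow_pos_of_pos hcpos _
  have hAle : A ≤ c ^ (-α) * (2*E/(2-α)) := by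
    rw [Real.rpow_neg hcpos.le]
    rw [← mul_le_mul_iff_right₀ hcα]
    calc c ^ α * A ≤ 2*E/(2-α) := hkey
      _ = c ^ α * ((c ^ α)⁻¹ * (2*E/(2-α))) := by
          rw [← mul_assoc, mul_inv_cancel₀ hcα.ne', one_mul]
  -- take square roots
  have hsq : A ^ ((1:ℝ)/2) ≤ (c ^ (-α)) ^ ((1:ℝ)/2) * (2*E/(2-α)) ^ ((1:ℝ)/2) := by
    rw [← Real.mul_rpow (by positivity) hEdiv]
    exact Real.rpow_le_rpow hA hAle (by norm_num)
  -- identify with Young's means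
  have hcneg : (c ^ (-α)) ^ ((1:ℝ)/2) = q ^ (-(α/4)) := by
    rw [hc, Real.sqrt_eq_rpow, ← Real.rpow_mul hqpos.le, ← Real.rpow_mul (by positivity)]
    ring_nf
  have hqinv : q ^ (-(α/4)) = (2*B/α) ^ (α/4) * (2*E/(2-α)) ^ (-(α/4)) := by
    have hqe : q⁻¹ = (2*B/α) * (2*E/(2-α))⁻¹ := by
      rw [hq]
      field_simp
    rw [Real.rpow_neg hqpos.le, ← Real.inv_rpow hqpos.le, hqe,
      Real.mul_rpow (by positivity) (by positivity), Real.inv_rpow hEdiv,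
      ← Real.rpow_neg hEdiv]
  have hcomb : (2*E/(2-α)) ^ (-(α/4)) * (2*E/(2-α)) ^ ((1:ℝ)/2)
      = (2*E/(2-α)) ^ ((2-α)/4) := by
    rw [← Real.rpow_add hEdivpos]
    ring_nf
  have hp2 : ((2*E/(2-α)) ^ ((2-α)/(4-α))) ^ ((4-α)/4) = (2*E/(2-α)) ^ ((2-α)/4) := by
    rw [← Real.rpow_mul hEdiv]
    congr 1
    field_simp
  have hyoung := Real.geom_mean_le_arith_mean2_weighted
    (w₁ := α/4) (w₂ := (4-α)/4) (p₁ := 2*B/α) (p₂ := (2*E/(2-α)) ^ ((2-α)/(4-α)))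
    (by positivity) (by positivity) (by positivity) (by positivity) (by ring)
  rw [hp2] at hyoung
  have hw : (α/4) * (2*B/α) = B/2 := by field_simp; ring
  rw [hw] at hyoung
  have hchain : A ^ ((1:ℝ)/2) ≤ (2*B/α) ^ (α/4) * (2*E/(2-α)) ^ ((2-α)/4) := by
    calc A ^ ((1:ℝ)/2) ≤ (c ^ (-α)) ^ ((1:ℝ)/2) * (2*E/(2-α)) ^ ((1:ℝ)/2) := hsq
      _ = (2*B/α) ^ (α/4) * ((2*E/(2-α)) ^ (-(α/4)) * (2*E/(2-α)) ^ ((1:ℝ)/2)) := by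
          rw [hcneg, hqinv]; ring
      _ = (2*B/α) ^ (α/4) * (2*E/(2-α)) ^ ((2-α)/4) := by rw [hcomb]
  linarith

end Stmt9Aux

namespace Stmt9Aux
open Real

lemma lemB {α : ℝ} (h0 : 0 < α) (h2 : α < 2) {A B M : ℝ} (hA : 0 ≤ A) (hB : 0 ≤ B)
    (hM : 0 ≤ M)
    (h : ∀ c : ℝ, 0 < c → (c ^ α * A) ^ ((1:ℝ)/2) - (1/2) * (c ^ 2 * B) ≤ M) :
    A - B ≤ ((2-α)/2) * (4*M/(4-α)) ^ ((4-α)/(2-α)) := by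
  have h2' : (0:ℝ) < 2 - α := by linarith
  have h4' : (0:ℝ) < 4 - α := by linarith
  have hPdiv : 0 ≤ 4*M/(4-α) := by positivity
  have hΦ : 0 ≤ ((2-α)/2) * (4*M/(4-α)) ^ ((4-α)/(2-α)) := by positivity
  set S : ℝ := A ^ ((1:ℝ)/2) with hS
  have hSnn : 0 ≤ S := rpow_nonneg hA _
  have h' : ∀ c : ℝ, 0 < c → c ^ (α/2) * S - c ^ 2 * ((1/2) * B) ≤ M := by
    intro c hc
    have := h c hc
    rw [Real.mul_rpow (rpow_nonneg hc.le _) hA, ← Real.rpow_mul hc.le] at this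
    rw [show α * ((1:ℝ)/2) = α/2 by ring, ← hS] at this
    linarith
  rcases eq_or_lt_of_le hA with hA0 | hA0
  · rw [← hA0]; linarith
  have hSpos : 0 < S := rpow_pos_of_pos hA0 _
  -- B > 0
  have hBpos : 0 < B := by
    by_contra hB0
    push_neg at hB0
    have hB0 : B = 0 := le_antisymm hB0 hB
    set c : ℝ := (2*(M+1)/S) ^ ((α/2)⁻¹) with hc
    have hcpos : 0 < c := rpow_pos_of_pos (by positivity) _
    have hcα : c ^ (α/2) = 2*(M+1)/S := Real.rpow_inv_rpow (by positivity) (by positivity)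
    have := h' c hcpos
    rw [hcα, hB0, div_mul_cancel₀ _ hSpos.ne'] at this
    simp only [mul_zero, zero_mul, sub_zero] at this
    linarith
  -- M > 0
  have hMpos : 0 < M := by
    by_contra hM0
    push_neg at hM0
    have hM0 : M = 0 := le_antisymm hM0 hM
    set c : ℝ := (S/B) ^ (((4-α)/2)⁻¹) with hc
    have hcpos : 0 < c := rpow_pos_of_pos (by positivity) _
    have hc4α : c ^ ((4-α)/2) = S/B := Real.rpow_inv_rpow (by positivity) (by positivity)
    have hsplit : (c:ℝ) ^ (2:ℕ) = c ^ (α/2) * c ^ ((4-α)/2) := by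
      rw [← Real.rpow_natCast c 2, ← Real.rpow_add hcpos]
      congr 1
      push_cast
      ring
    have h5 := h' c hcpos
    rw [hM0, hsplit, hc4α] at h5
    have hcα : 0 < c ^ (α/2) := rpow_pos_of_pos hcpos _
    have h3 : S ≤ S/B * ((1/2) * B) := by
      nlinarith [mul_pos hcα (mul_pos (div_pos hSpos hBpos) (by positivity : (0:ℝ) < (1/2)*B))]
    have heq : S/B * ((1/2) * B) = S/2 := by field_simp
    rw [heq] at h3
    linarith
  -- main case
  set P : ℝ := 4*M/(4-α) with hP
  have hPpos : 0 < P := by positivity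
  set q : ℝ := 2*α*M/((4-α)*B) with hq
  have hqpos : 0 < q := by positivity
  set c : ℝ := Real.sqrt q with hc
  have hcpos : 0 < c := Real.sqrt_pos.2 hqpos
  have hc2 : (c:ℝ) ^ (2:ℕ) = q := Real.sq_sqrt hqpos.le
  have hkey : c ^ (α/2) * S ≤ P := by
    have h5 := h' c hcpos
    have hq2 : q * ((1/2) * B) = α*M/(4-α) := by
      rw [hq, div_mul_eq_mul_div, div_eq_div_iff (by positivity) (by positivity)]
      ring
    have h6 : c ^ (α/2) * S ≤ M + q * ((1/2) * B) := by nlinarith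
    rw [hq2] at h6
    calc c ^ (α/2) * S ≤ M + α*M/(4-α) := h6
      _ = P := by rw [hP]; field_simp; ring
  have hcα : 0 < c ^ (α/2) := rpow_pos_of_pos hcpos _
  have hSle : S ≤ c ^ (-(α/2)) * P := by
    rw [Real.rpow_neg hcpos.le]
    rw [← mul_le_mul_iff_right₀ hcα]
    calc c ^ (α/2) * S ≤ P := hkey
      _ = c ^ (α/2) * ((c ^ (α/2))⁻¹ * P) := by
          rw [← mul_assoc, mul_inv_cancel₀ hcα.ne', one_mul]
  have hA2 : A = S ^ (2:ℕ) := by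
    rw [hS, ← Real.rpow_natCast (A ^ ((1:ℝ)/2)) 2, ← Real.rpow_mul hA]
    norm_num
  have hAle : A ≤ c ^ (-α) * P ^ (2:ℝ) := by
    rw [hA2]
    calc S ^ (2:ℕ) ≤ (c ^ (-(α/2)) * P) ^ (2:ℕ) := by
          apply pow_le_pow_left₀ hSnn hSle
      _ = (c ^ (-(α/2))) ^ (2:ℕ) * P ^ (2:ℕ) := by ring
      _ = c ^ (-α) * P ^ (2:ℝ) := by
          rw [← Real.rpow_natCast (c ^ (-(α/2))) 2, ← Real.rpow_mul hcpos.le,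
            ← Real.rpow_natCast P 2]
          norm_num
  have hcneg : c ^ (-α) = q ^ (-(α/2)) := by
    rw [hc, Real.sqrt_eq_rpow, ← Real.rpow_mul hqpos.le]
    ring_nf
  have hqinv : q ^ (-(α/2)) = (2*B/α) ^ (α/2) * P ^ (-(α/2)) := by
    have hqe : q⁻¹ = (2*B/α) * P⁻¹ := by
      rw [hq, hP]
      field_simp
      ring
    rw [Real.rpow_neg hqpos.le, ← Real.inv_rpow hqpos.le, hqe,
      Real.mul_rpow (by positivity) (by positivity), Real.inv_rpow hPpos.le,
      ← Real.rpow_neg hPpos.le]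
  have hcomb : P ^ (-(α/2)) * P ^ (2:ℝ) = P ^ ((4-α)/2) := by
    rw [← Real.rpow_add hPpos]
    ring_nf
  have hp2 : (P ^ ((4-α)/(2-α))) ^ ((2-α)/2) = P ^ ((4-α)/2) := by
    rw [← Real.rpow_mul hPpos.le]
    congr 1
    field_simp
  have hyoung := Real.geom_mean_le_arith_mean2_weighted
    (w₁ := α/2) (w₂ := (2-α)/2) (p₁ := 2*B/α) (p₂ := P ^ ((4-α)/(2-α)))
    (by positivity) (by positivity) (by positivity) (by positivity) (by ring)
  rw [hp2] at hyoung
  have hw : (α/2) * (2*B/α) = B := by field_simp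
  rw [hw] at hyoung
  have hchain : A ≤ (2*B/α) ^ (α/2) * P ^ ((4-α)/2) := by
    calc A ≤ c ^ (-α) * P ^ (2:ℝ) := hAle
      _ = (2*B/α) ^ (α/2) * (P ^ (-(α/2)) * P ^ (2:ℝ)) := by
          rw [hcneg, hqinv]; ring
      _ = (2*B/α) ^ (α/2) * P ^ ((4-α)/2) := by rw [hcomb]
  linarith

end Stmt9Aux
namespace Stmt9Aux

variable {ℓ : ℕ}

local notation "V" => EuclideanSpace ℝ (Fin ℓ)

def Adm (g : EuclideanSpace ℝ (Fin ℓ) → ℝ) : Prop :=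
  Differentiable ℝ g ∧ MemLp g 2 volume ∧ (∫ x, (g x) ^ 2) = 1 ∧
    Integrable (fun x => ‖fderiv ℝ g x‖ ^ 2)

noncomputable def Aval (γ g : EuclideanSpace ℝ (Fin ℓ) → ℝ) : ℝ :=
  ∫ x, ∫ y, γ (x - y) * (g x) ^ 2 * (g y) ^ 2

noncomputable def Bval (g : EuclideanSpace ℝ (Fin ℓ) → ℝ) : ℝ :=
  ∫ x, ‖fderiv ℝ g x‖ ^ 2

lemma Aval_nonneg {γ g : EuclideanSpace ℝ (Fin ℓ) → ℝ} (hγ0 : ∀ x, 0 ≤ γ x) :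
    0 ≤ Aval γ g :=
  integral_nonneg fun x => integral_nonneg fun y => by
    have := hγ0 (x - y); positivity

lemma Bval_nonneg {g : EuclideanSpace ℝ (Fin ℓ) → ℝ} : 0 ≤ Bval g :=
  integral_nonneg fun x => by positivity

lemma comp_smul_int (f : EuclideanSpace ℝ (Fin ℓ) → ℝ) {c : ℝ} (hc : 0 < c) :
    ∫ x, f (c • x) = (c ^ ℓ)⁻¹ * ∫ x, f x := by
  rw [MeasureTheory.Measure.integral_comp_smul_of_nonneg volume f c (hR := hc.le)]
  simp [finrank_euclideanSpace_fin, smul_eq_mul]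

lemma memLp_comp_smul {g : EuclideanSpace ℝ (Fin ℓ) → ℝ} (hg : MemLp g 2 volume)
    {c : ℝ} (hc : 0 < c) : MemLp (fun x : EuclideanSpace ℝ (Fin ℓ) => g (c • x)) 2 volume := by
  let t := ((Homeomorph.smul (isUnit_iff_ne_zero.2 hc.ne').unit).toMeasurableEquiv :
      EuclideanSpace ℝ (Fin ℓ) ≃ᵐ EuclideanSpace ℝ (Fin ℓ))
  have h1 : MemLp g 2 (Measure.map (c • ·) volume) := by
    rw [Measure.map_addHaar_smul volume hc.ne']
    exact hg.smul_measure ENNReal.ofReal_ne_top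
  exact (MeasurableEquiv.memLp_map_measure_iff t).1 h1

lemma fderiv_scale {g : EuclideanSpace ℝ (Fin ℓ) → ℝ} (hg : Differentiable ℝ g)
    (k : ℝ) {c : ℝ} (hc : 0 < c) (x : EuclideanSpace ℝ (Fin ℓ)) :
    fderiv ℝ (fun x : EuclideanSpace ℝ (Fin ℓ) => k * g (c • x)) x
      = (k * c) • fderiv ℝ g (c • x) := by
  have hsm : Differentiable ℝ (fun x : EuclideanSpace ℝ (Fin ℓ) => c • x) :=
    differentiable_id.const_smul c
  have hgc : DifferentiableAt ℝ (fun x : EuclideanSpace ℝ (Fin ℓ) => g (c • x)) x :=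
    (hg.comp hsm).differentiableAt
  rw [fderiv_const_mul hgc k]
  have hcomp : fderiv ℝ (fun x : EuclideanSpace ℝ (Fin ℓ) => g (c • x)) x
      = (fderiv ℝ g (c • x)).comp (fderiv ℝ (fun x : EuclideanSpace ℝ (Fin ℓ) => c • x) x) :=
    by exact fderiv_comp x (hg _) (hsm x)
  have hid : fderiv ℝ (fun x : EuclideanSpace ℝ (Fin ℓ) => c • x) x
      = c • ContinuousLinearMap.id ℝ (EuclideanSpace ℝ (Fin ℓ)) := by
    rw [fderiv_fun_const_smul differentiableAt_fun_id c, fderiv_id']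
  rw [hcomp, hid, ContinuousLinearMap.comp_smul, ContinuousLinearMap.comp_id, smul_smul]

end Stmt9Aux

namespace Stmt9Aux

lemma scale {α : ℝ} {γ g : EuclideanSpace ℝ (Fin ℓ) → ℝ}
    (hscal : ∀ c > (0:ℝ), ∀ x, γ (c • x) = c ^ (-α) * γ x)
    (hg : Adm g) {c : ℝ} (hc : 0 < c) :
    ∃ g' : EuclideanSpace ℝ (Fin ℓ) → ℝ,
      Adm g' ∧ Aval γ g' = c ^ α * Aval γ g ∧ Bval g' = c ^ 2 * Bval g := by
  obtain ⟨hg1, hg2, hg3, hg4⟩ := hg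
  set k : ℝ := c ^ ((ℓ:ℝ)/2) with hkdef
  have hkpos : 0 < k := rpow_pos_of_pos hc _
  have hclpos : (0:ℝ) < c ^ ℓ := pow_pos hc ℓ
  have hk2 : k ^ 2 = c ^ ℓ := by
    rw [hkdef, ← Real.rpow_natCast (c ^ ((ℓ:ℝ)/2)) 2, ← Real.rpow_mul hc.le,
      ← Real.rpow_natCast c ℓ]
    congr 1
    push_cast
    ring
  have hcc : c ^ α * c ^ (-α) = 1 := by
    rw [← Real.rpow_add hc]
    simp
  have hder : ∀ x, fderiv ℝ (fun x : EuclideanSpace ℝ (Fin ℓ) => k * g (c • x)) x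
      = (k * c) • fderiv ℝ g (c • x) := fderiv_scale hg1 k hc
  have hnorm : ∀ x : EuclideanSpace ℝ (Fin ℓ),
      ‖fderiv ℝ (fun x : EuclideanSpace ℝ (Fin ℓ) => k * g (c • x)) x‖ ^ 2
        = (k * c) ^ 2 * ‖fderiv ℝ g (c • x)‖ ^ 2 := by
    intro x
    rw [hder x, norm_smul, Real.norm_eq_abs, abs_of_pos (mul_pos hkpos hc), mul_pow]
  refine ⟨fun x => k * g (c • x), ⟨?_, ?_, ?_, ?_⟩, ?_, ?_⟩
  · exact (hg1.comp (differentiable_id.const_smul c)).const_mul k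
  · exact (memLp_comp_smul hg2 hc).const_mul k
  · have h3 : (∫ x : EuclideanSpace ℝ (Fin ℓ), (g (c • x)) ^ 2)
        = (c ^ ℓ)⁻¹ * ∫ x, (g x) ^ 2 := comp_smul_int (fun y => (g y) ^ 2) hc
    simp_rw [mul_pow]
    rw [integral_const_mul _ _, h3, hg3, hk2]
    field_simp
  · have : (fun x : EuclideanSpace ℝ (Fin ℓ) =>
        ‖fderiv ℝ (fun x : EuclideanSpace ℝ (Fin ℓ) => k * g (c • x)) x‖ ^ 2)
        = fun x => (k * c) ^ 2 * ‖fderiv ℝ g (c • x)‖ ^ 2 := funext hnorm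
    rw [this]
    exact (hg4.comp_smul hc.ne').const_mul _
  · -- Aval scaling
    have hinner : ∀ x : EuclideanSpace ℝ (Fin ℓ),
        (∫ y, γ (x - y) * (k ^ 2 * (g (c • x)) ^ 2) * (k ^ 2 * (g (c • y)) ^ 2))
          = (k ^ 2 * k ^ 2 * (c ^ ℓ)⁻¹ * c ^ α) *
              ((g (c • x)) ^ 2 * ∫ v, γ (c • x - v) * (g v) ^ 2) := by
      intro x
      have e1 : (fun y : EuclideanSpace ℝ (Fin ℓ) =>
          γ (x - y) * (k ^ 2 * (g (c • x)) ^ 2) * (k ^ 2 * (g (c • y)) ^ 2))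
          = fun y => (k ^ 2 * k ^ 2 * (g (c • x)) ^ 2) * (γ (x - y) * (g (c • y)) ^ 2) := by
        funext y
        ring
      rw [e1, integral_const_mul _ _]
      have e2 : (fun y : EuclideanSpace ℝ (Fin ℓ) => γ (x - y) * (g (c • y)) ^ 2)
          = fun y => (fun v => c ^ α * (γ (c • x - v) * (g v) ^ 2)) (c • y) := by
        funext y
        simp only
        have hγ : γ (c • x - c • y) = c ^ (-α) * γ (x - y) := by
          rw [← smul_sub]
          exact hscal c hc _
        calc γ (x - y) * (g (c • y)) ^ 2
            = (c ^ α * c ^ (-α)) * (γ (x - y) * (g (c • y)) ^ 2) := by rw [hcc, one_mul]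
          _ = c ^ α * (γ (c • x - c • y) * (g (c • y)) ^ 2) := by rw [hγ]; ring
      rw [e2, comp_smul_int (fun v => c ^ α * (γ (c • x - v) * (g v) ^ 2)) hc,
        integral_const_mul _ _]
      ring
    have hAg : Aval γ g = ∫ u, (g u) ^ 2 * ∫ v, γ (u - v) * (g v) ^ 2 := by
      unfold Aval
      congr 1
      funext x
      rw [← integral_const_mul _ _]
      congr 1
      funext y
      ring
    have houter : Aval γ (fun x => k * g (c • x))
        = ∫ x, (fun u : EuclideanSpace ℝ (Fin ℓ) =>
            (k ^ 2 * k ^ 2 * (c ^ ℓ)⁻¹ * c ^ α) *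
              ((g u) ^ 2 * ∫ v, γ (u - v) * (g v) ^ 2)) (c • x) := by
      unfold Aval
      simp_rw [mul_pow]
      congr 1
      funext x
      exact hinner x
    rw [houter, comp_smul_int (fun u => (k ^ 2 * k ^ 2 * (c ^ ℓ)⁻¹ * c ^ α) *
        ((g u) ^ 2 * ∫ v, γ (u - v) * (g v) ^ 2)) hc, integral_const_mul _ _, ← hAg, hk2]
    field_simp
  · -- Bval scaling
    unfold Bval
    have : (fun x : EuclideanSpace ℝ (Fin ℓ) =>
        ‖fderiv ℝ (fun x : EuclideanSpace ℝ (Fin ℓ) => k * g (c • x)) x‖ ^ 2)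
        = fun x => (k * c) ^ 2 * ((fun y => ‖fderiv ℝ g y‖ ^ 2) (c • x)) := funext hnorm
    rw [this, integral_const_mul _ _, comp_smul_int (fun y => ‖fderiv ℝ g y‖ ^ 2) hc,
      mul_pow, hk2]
    field_simp

end Stmt9Aux

open Stmt9Aux in
/-- For `(−α)`-homogeneous `γ`, the Hartree energy `E_H(γ)` is finite iff `M(γ)` is finite,
and in that case `M(γ) = ((4−α)/4)(2E_H(γ)/(2−α))^{(2−α)/(4−α)}`, where both quantities are
suprema over the unit sphere `G` of `W^{1,2}(ℝ^ℓ)`. -/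
theorem stmt9 {ℓ : ℕ} (α : ℝ) (hα : α ∈ Ioo (0:ℝ) 2)
    (γ : EuclideanSpace ℝ (Fin ℓ) → ℝ) (hγ0 : ∀ x, 0 ≤ γ x)
    (hscal : ∀ c > (0:ℝ), ∀ x, γ (c • x) = c ^ (-α) * γ x)
    (SE SM : Set ℝ)
    (hSE : SE = {r : ℝ | ∃ g : EuclideanSpace ℝ (Fin ℓ) → ℝ, Differentiable ℝ g ∧
      MemLp g 2 volume ∧ (∫ x, (g x) ^ 2) = 1 ∧
      Integrable (fun x => ‖fderiv ℝ g x‖ ^ 2) ∧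
      r = (∫ x, ∫ y, γ (x - y) * (g x) ^ 2 * (g y) ^ 2) - (∫ x, ‖fderiv ℝ g x‖ ^ 2)})
    (hSM : SM = {r : ℝ | ∃ g : EuclideanSpace ℝ (Fin ℓ) → ℝ, Differentiable ℝ g ∧
      MemLp g 2 volume ∧ (∫ x, (g x) ^ 2) = 1 ∧
      Integrable (fun x => ‖fderiv ℝ g x‖ ^ 2) ∧
      r = (∫ x, ∫ y, γ (x - y) * (g x) ^ 2 * (g y) ^ 2) ^ ((1:ℝ)/2)
            - (1/2) * (∫ x, ‖fderiv ℝ g x‖ ^ 2)}) :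
    (BddAbove SE ↔ BddAbove SM)
    ∧ (BddAbove SE →
        sSup SM = ((4-α)/4) * (2 * sSup SE / (2-α)) ^ ((2-α)/(4-α))) := by
  obtain ⟨h0α, h2α⟩ := hα
  have h2' : (0:ℝ) < 2 - α := by linarith
  have h4' : (0:ℝ) < 4 - α := by linarith
  have hSE' : SE = {r : ℝ | ∃ g : EuclideanSpace ℝ (Fin ℓ) → ℝ,
      Adm g ∧ r = Aval γ g - Bval g} := by
    rw [hSE]; ext r
    simp only [Set.mem_setOf_eq, Adm, Aval, Bval]
    tauto
  have hSM' : SM = {r : ℝ | ∃ g : EuclideanSpace ℝ (Fin ℓ) → ℝ,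
      Adm g ∧ r = (Aval γ g) ^ ((1:ℝ)/2) - (1/2) * Bval g} := by
    rw [hSM]; ext r
    simp only [Set.mem_setOf_eq, Adm, Aval, Bval]
    tauto
  have hmemE : ∀ g : EuclideanSpace ℝ (Fin ℓ) → ℝ, Adm g → ∀ c : ℝ, 0 < c →
      c ^ α * Aval γ g - c ^ 2 * Bval g ∈ SE := by
    intro g hg c hc
    obtain ⟨g', hg', hA', hB'⟩ := scale hscal hg hc
    rw [hSE']
    exact ⟨g', hg', by rw [hA', hB']⟩
  have hmemM : ∀ g : EuclideanSpace ℝ (Fin ℓ) → ℝ, Adm g → ∀ c : ℝ, 0 < c →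
      (c ^ α * Aval γ g) ^ ((1:ℝ)/2) - (1/2) * (c ^ 2 * Bval g) ∈ SM := by
    intro g hg c hc
    obtain ⟨g', hg', hA', hB'⟩ := scale hscal hg hc
    rw [hSM']
    exact ⟨g', hg', by rw [hA', hB']⟩
  have hAnn : ∀ g : EuclideanSpace ℝ (Fin ℓ) → ℝ, 0 ≤ Aval γ g :=
    fun g => Aval_nonneg hγ0
  have hBnn : ∀ g : EuclideanSpace ℝ (Fin ℓ) → ℝ, 0 ≤ Bval g := fun g => Bval_nonneg
  have hfwd : BddAbove SE → BddAbove SM := by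
    rintro ⟨E₀, hE₀⟩
    refine ⟨((4-α)/4) * (2*(max E₀ 0)/(2-α)) ^ ((2-α)/(4-α)), ?_⟩
    rintro m hm
    rw [hSM'] at hm
    obtain ⟨g, hg, rfl⟩ := hm
    exact lemA h0α h2α (hAnn g) (hBnn g) (le_max_right _ _)
      (fun c hc => le_trans (hE₀ (hmemE g hg c hc)) (le_max_left _ _))
  have hbwd : BddAbove SM → BddAbove SE := by
    rintro ⟨M₀, hM₀⟩
    refine ⟨((2-α)/2) * (4*(max M₀ 0)/(4-α)) ^ ((4-α)/(2-α)), ?_⟩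
    rintro e he
    rw [hSE'] at he
    obtain ⟨g, hg, rfl⟩ := he
    exact lemB h0α h2α (hAnn g) (hBnn g) (le_max_right _ _)
      (fun c hc => le_trans (hM₀ (hmemM g hg c hc)) (le_max_left _ _))
  refine ⟨⟨hfwd, hbwd⟩, ?_⟩
  intro hbdE
  have hbdM := hfwd hbdE
  rcases Set.eq_empty_or_nonempty SE with hempty | hne
  · have hSMe : SM = ∅ := by
      rw [Set.eq_empty_iff_forall_notMem]
      intro m hm
      rw [hSM'] at hm
      obtain ⟨g, hg, rfl⟩ := hm
      have hmem : Aval γ g - Bval g ∈ SE := by rw [hSE']; exact ⟨g, hg, rfl⟩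
      rw [hempty] at hmem
      exact hmem
    rw [hempty, hSMe, Real.sSup_empty,
      show (2:ℝ)*0/(2-α) = 0 by ring,
      Real.zero_rpow (by positivity : (0:ℝ) < (2-α)/(4-α)).ne', mul_zero]
  · obtain ⟨e₀, he₀⟩ := hne
    have he₀' := he₀
    rw [hSE'] at he₀'
    obtain ⟨g₀, hg₀, -⟩ := he₀'
    set A₀ := Aval γ g₀ with hA₀
    set B₀ := Bval g₀ with hB₀
    have hrw0 : Filter.Tendsto (fun c : ℝ => c ^ α) (nhdsWithin 0 (Set.Ioi 0)) (nhds 0) := by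
      have h1 : ContinuousAt (fun x : ℝ => x ^ α) 0 :=
        Real.continuousAt_rpow_const 0 α (Or.inr h0α.le)
      have h2 := h1.tendsto
      rw [Real.zero_rpow h0α.ne'] at h2
      exact h2.mono_left nhdsWithin_le_nhds
    have hsq0 : Filter.Tendsto (fun c : ℝ => c ^ 2 * B₀) (nhdsWithin 0 (Set.Ioi 0)) (nhds 0) := by
      have h1 : Filter.Tendsto (fun c : ℝ => c ^ 2 * B₀) (nhds 0) (nhds (0 ^ 2 * B₀)) :=
        ((continuous_pow 2).mul continuous_const).tendsto 0
      norm_num at h1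
      exact h1.mono_left nhdsWithin_le_nhds
    have hE0 : 0 ≤ sSup SE := by
      have hlim : Filter.Tendsto (fun c : ℝ => c ^ α * A₀ - c ^ 2 * B₀)
          (nhdsWithin 0 (Set.Ioi 0)) (nhds 0) := by
        have h1 := hrw0.mul_const A₀
        norm_num at h1
        simpa using h1.sub hsq0
      refine le_of_tendsto hlim ?_
      filter_upwards [self_mem_nhdsWithin] with c hc
      exact le_csSup hbdE (hmemE g₀ hg₀ c hc)
    have hM0 : 0 ≤ sSup SM := by
      have hlim : Filter.Tendsto (fun c : ℝ => (c ^ α * A₀) ^ ((1:ℝ)/2) - (1/2) * (c ^ 2 * B₀))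
          (nhdsWithin 0 (Set.Ioi 0)) (nhds 0) := by
        have h1 := hrw0.mul_const A₀
        norm_num at h1
        have h2 : ContinuousAt (fun x : ℝ => x ^ ((1:ℝ)/2)) 0 :=
          Real.continuousAt_rpow_const 0 _ (Or.inr (by norm_num : (0:ℝ) ≤ 1/2))
        have h3 := (h2.tendsto.comp h1)
        rw [Real.zero_rpow (by norm_num : ((1:ℝ)/2) ≠ 0)] at h3
        have h4 := hsq0.const_mul ((1:ℝ)/2)
        norm_num at h4
        have := h3.sub h4
        norm_num at this
        exact this
      refine le_of_tendsto hlim ?_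
      filter_upwards [self_mem_nhdsWithin] with c hc
      exact le_csSup hbdM (hmemM g₀ hg₀ c hc)
    have hSMne : SM.Nonempty := by
      refine ⟨(Aval γ g₀) ^ ((1:ℝ)/2) - (1/2) * Bval g₀, ?_⟩
      rw [hSM']
      exact ⟨g₀, hg₀, rfl⟩
    have hup : sSup SM ≤ ((4-α)/4) * (2 * sSup SE/(2-α)) ^ ((2-α)/(4-α)) := by
      apply csSup_le hSMne
      intro m hm
      rw [hSM'] at hm
      obtain ⟨g, hg, rfl⟩ := hm
      exact lemA h0α h2α (hAnn g) (hBnn g) hE0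
        (fun c hc => le_csSup hbdE (hmemE g hg c hc))
    have hEΦ : sSup SE ≤ ((2-α)/2) * (4 * sSup SM/(4-α)) ^ ((4-α)/(2-α)) := by
      apply csSup_le ⟨e₀, he₀⟩
      intro e he
      rw [hSE'] at he
      obtain ⟨g, hg, rfl⟩ := he
      exact lemB h0α h2α (hAnn g) (hBnn g) hM0
        (fun c hc => le_csSup hbdM (hmemM g hg c hc))
    have hXnn : (0:ℝ) ≤ 4 * sSup SM/(4-α) := by
      apply div_nonneg (by linarith) h4'.le
    have h1 : 2 * sSup SE/(2-α) ≤ (4 * sSup SM/(4-α)) ^ ((4-α)/(2-α)) := by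
      rw [div_le_iff₀ h2']
      nlinarith [hEΦ]
    have hEnn : (0:ℝ) ≤ 2 * sSup SE/(2-α) := div_nonneg (by linarith) h2'.le
    have h2 : (2 * sSup SE/(2-α)) ^ ((2-α)/(4-α))
        ≤ ((4 * sSup SM/(4-α)) ^ ((4-α)/(2-α))) ^ ((2-α)/(4-α)) :=
      Real.rpow_le_rpow hEnn h1 (by positivity)
    have h3 : ((4 * sSup SM/(4-α)) ^ ((4-α)/(2-α))) ^ ((2-α)/(4-α)) = 4 * sSup SM/(4-α) := by
      rw [← Real.rpow_mul hXnn,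
        show ((4-α)/(2-α)) * ((2-α)/(4-α)) = 1 by field_simp, Real.rpow_one]
    have hlow : ((4-α)/4) * (2 * sSup SE/(2-α)) ^ ((2-α)/(4-α)) ≤ sSup SM := by
      calc ((4-α)/4) * (2 * sSup SE/(2-α)) ^ ((2-α)/(4-α))
          ≤ ((4-α)/4) * (4 * sSup SM/(4-α)) := by
            apply mul_le_mul_of_nonneg_left _ (by positivity)
            rw [← h3]
            exact h2
        _ = sSup SM := by field_simp
    exact le_antisymm hup hlow
end
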